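/- arXiv:1604.02637 — 6 statements merged into one kernel-verified Lean document; each statement's English description precedes it below -/
import Mathlib

section
/- Let φ and ψ be two analytic (holomorphic) functions on a simply connected domain Ω ⊆ ℂ with φ not identically zero, and let r and s be two nonzero real numbers. Then |φ(z)|² = r·|ψ(z)|² + s for all z ∈ Ω if and only if there exist two complex constants c₁ and c₂ with |c₁|² = r·|c₂|² + s such that φ ≡ c₁ and ψ ≡ c₂ on Ω. -/
open Set

open Complex in
private lemma hasDerivAt_normSq_comp {g : ℝ → ℂ} {g' : ℂ} {t : ℝ} (h : HasDerivAt g g' t) :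
    HasDerivAt (fun t => Complex.normSq (g t)) (2 * ((starRingEnd ℂ) (g t) * g').re) t := by
  have hre : HasDerivAt (fun t => (g t).re) g'.re t :=
    Complex.reCLM.hasFDerivAt.comp_hasDerivAt t h
  have him : HasDerivAt (fun t => (g t).im) g'.im t :=
    Complex.imCLM.hasFDerivAt.comp_hasDerivAt t h
  have h2 := (hre.mul hre).add (him.mul him)
  have hfun : (fun t => Complex.normSq (g t))
      = fun t => (g t).re * (g t).re + (g t).im * (g t).im := by
    funext u; simp [Complex.normSq_apply]
  rw [hfun]
  refine h2.congr_deriv ?_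
  simp [Complex.mul_re]
  ring

private lemma hasDerivAt_conj_comp {g : ℝ → ℂ} {g' : ℂ} {t : ℝ} (h : HasDerivAt g g' t) :
    HasDerivAt (fun t => (starRingEnd ℂ) (g t)) ((starRingEnd ℂ) g') t := by
  exact h.star

private lemma hasDerivAt_line (z v : ℂ) (t : ℝ) :
    HasDerivAt (fun t : ℝ => z + t • v) v t := by
  simpa using ((hasDerivAt_id t).smul_const v).const_add z

private lemma const_of_deriv_eq_zero' {Ω : Set ℂ} (hΩo : IsOpen Ω) (hΩc : IsPreconnected Ω)
    {f : ℂ → ℂ} (hf : AnalyticOnNhd ℂ f Ω) (h0 : ∀ z ∈ Ω, deriv f z = 0)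
    {z₀ : ℂ} (hz₀ : z₀ ∈ Ω) : ∀ z ∈ Ω, f z = f z₀ := by
  intro z hz
  refine hf.eqOn_of_preconnected_of_eventuallyEq (analyticOnNhd_const) hΩc hz₀ ?_ hz
  obtain ⟨ε, hε, hball⟩ := Metric.isOpen_iff.mp hΩo z₀ hz₀
  have hconst : ∀ x ∈ Metric.ball z₀ ε, f x = f z₀ := by
    intro x hx
    refine (convex_ball z₀ ε).is_const_of_fderivWithin_eq_zero (𝕜 := ℂ)
      (hf.differentiableOn.mono hball) (fun y hy => ?_) hx (Metric.mem_ball_self hε)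
    rw [fderivWithin_of_isOpen Metric.isOpen_ball hy]
    have hd : HasDerivAt f 0 y := by
      rw [← h0 y (hball hy)]
      exact (hf y (hball hy)).differentiableAt.hasDerivAt
    rw [hd.hasFDerivAt.fderiv]
    ext
    simp
  exact Filter.eventually_of_mem (Metric.ball_mem_nhds z₀ hε) hconst

private lemma deriv_line_zero {Ω : Set ℂ} (hΩo : IsOpen Ω) {E : Type*} [NormedAddCommGroup E]
    [NormedSpace ℝ E] {F : ℂ → E} {c : E} (hF : ∀ w ∈ Ω, F w = c) {z : ℂ} (hz : z ∈ Ω)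
    (v : ℂ) {D : E} (hD : HasDerivAt (fun t : ℝ => F (z + t • v)) D 0) : D = 0 := by
  have hc : Continuous fun t : ℝ => z + t • v := by continuity
  have hmem : ∀ᶠ t : ℝ in nhds 0, z + t • v ∈ Ω :=
    hc.continuousAt.preimage_mem_nhds (hΩo.mem_nhds (by simpa using hz))
  have heq : (fun t : ℝ => F (z + t • v)) =ᶠ[nhds 0] fun _ => c :=
    hmem.mono fun t ht => hF _ ht
  exact hD.unique ((hasDerivAt_const (0 : ℝ) c).congr_of_eventuallyEq heq)

/-- **Lemma 1 (equal-modulus lemma).** If `φ, ψ` are holomorphic on a simply connected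
domain `Ω ⊆ ℂ`, `φ` is not identically zero, and `r, s` are nonzero reals, then
`|φ|² = r|ψ|² + s` on `Ω` iff `φ` and `ψ` are constants `c₁, c₂` with `|c₁|² = r|c₂|² + s`. -/
theorem stmt_0 (Ω : Set ℂ) (hΩne : Ω.Nonempty) (hΩo : IsOpen Ω) (hΩc : IsConnected Ω)
    (hΩsc : SimplyConnectedSpace Ω)
    (φ ψ : ℂ → ℂ) (hφ : DifferentiableOn ℂ φ Ω) (hψ : DifferentiableOn ℂ ψ Ω)
    (hφ0 : ∃ z ∈ Ω, φ z ≠ 0)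
    (r s : ℝ) (hr : r ≠ 0) (hs : s ≠ 0) :
    (∀ z ∈ Ω, ‖φ z‖ ^ 2 = r * ‖ψ z‖ ^ 2 + s) ↔
      ∃ c₁ c₂ : ℂ, ‖c₁‖ ^ 2 = r * ‖c₂‖ ^ 2 + s ∧
        (∀ z ∈ Ω, φ z = c₁) ∧ (∀ z ∈ Ω, ψ z = c₂) := by
  constructor
  · intro H
    have Hn : ∀ z ∈ Ω, Complex.normSq (φ z) = r * Complex.normSq (ψ z) + s := by
      intro z hz
      have := H z hz
      rwa [Complex.sq_norm, Complex.sq_norm] at this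
    have hφa : AnalyticOnNhd ℂ φ Ω := hφ.analyticOnNhd hΩo
    have hψa : AnalyticOnNhd ℂ ψ Ω := hψ.analyticOnNhd hΩo
    have hφ'a : AnalyticOnNhd ℂ (deriv φ) Ω := hφa.deriv
    have hψ'a : AnalyticOnNhd ℂ (deriv ψ) Ω := hψa.deriv
    -- derivative of f ∘ line
    have hline : ∀ {f : ℂ → ℂ}, AnalyticOnNhd ℂ f Ω → ∀ {z : ℂ}, z ∈ Ω → ∀ v : ℂ,
        HasDerivAt (fun t : ℝ => f (z + t • v)) (v * deriv f z) 0 := by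
      intro f hfa z hz v
      have h1 : HasDerivAt f (deriv f z) ((fun t : ℝ => z + t • v) 0) := by
        simpa using (hfa z hz).differentiableAt.hasDerivAt
      have := h1.scomp (0 : ℝ) (hasDerivAt_line z v 0)
      simpa [smul_eq_mul, Function.comp_def] using this
    -- Step A : conj φ * φ' = r * (conj ψ * ψ') on Ω
    have stepA : ∀ z ∈ Ω, (starRingEnd ℂ) (φ z) * deriv φ z
        = (r : ℂ) * ((starRingEnd ℂ) (ψ z) * deriv ψ z) := by
      intro z hz
      have key : ∀ v : ℂ,
          2 * ((starRingEnd ℂ) (φ z) * (v * deriv φ z)).re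
            - r * (2 * ((starRingEnd ℂ) (ψ z) * (v * deriv ψ z)).re) = 0 := by
        intro v
        have h1 := hasDerivAt_normSq_comp (hline hφa hz v)
        have h2 := (hasDerivAt_normSq_comp (hline hψa hz v)).const_mul r
        have h3 := h1.sub h2
        have hFconst : ∀ w ∈ Ω,
            Complex.normSq (φ w) - r * Complex.normSq (ψ w) = s := by
          intro w hw; rw [Hn w hw]; ring
        have := deriv_line_zero hΩo hFconst hz v (by simpa [Pi.sub_def, Pi.mul_def] using h3)
        simpa using this
      have k1 := key 1
      have kI := key Complex.I
      simp only [one_mul] at k1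
      have hre : ((starRingEnd ℂ) (φ z) * deriv φ z).re
          = r * ((starRingEnd ℂ) (ψ z) * deriv ψ z).re := by linarith
      have him : ((starRingEnd ℂ) (φ z) * deriv φ z).im
          = r * ((starRingEnd ℂ) (ψ z) * deriv ψ z).im := by
        have e1 : ∀ c d : ℂ, (c * (Complex.I * d)).re = -(c * d).im := by
          intro c d
          simp [Complex.mul_re, Complex.mul_im]
          ring
        rw [e1, e1] at kI
        linarith
      apply Complex.ext
      · rw [hre]; simp [Complex.mul_re]
      · rw [him]; simp [Complex.mul_im]
    -- Step B : |φ'|² = r * |ψ'|² on Ω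
    have stepB : ∀ z ∈ Ω,
        Complex.normSq (deriv φ z) = r * Complex.normSq (deriv ψ z) := by
      intro z hz
      have key : ∀ v : ℂ,
          ((starRingEnd ℂ) (v * deriv φ z) * deriv φ z
              + (starRingEnd ℂ) (φ z) * (v * deriv (deriv φ) z))
            - (r : ℂ) * ((starRingEnd ℂ) (v * deriv ψ z) * deriv ψ z
              + (starRingEnd ℂ) (ψ z) * (v * deriv (deriv ψ) z)) = 0 := by
        intro v
        have hφc := hasDerivAt_conj_comp (hline hφa hz v)
        have hφ' := hline hφ'a hz v
        have hψc := hasDerivAt_conj_comp (hline hψa hz v)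
        have hψ' := hline hψ'a hz v
        have h1 := hφc.mul hφ'
        have h2 := (hψc.mul hψ').const_mul ((r : ℂ))
        have h3 := h1.sub h2
        have hFconst : ∀ w ∈ Ω,
            (starRingEnd ℂ) (φ w) * deriv φ w
              - (r : ℂ) * ((starRingEnd ℂ) (ψ w) * deriv ψ w) = 0 := by
          intro w hw; rw [stepA w hw]; ring
        have := deriv_line_zero hΩo hFconst hz v (by simpa [Pi.sub_def, Pi.mul_def] using h3)
        simpa using this
      have k1 := key 1
      have kI := key Complex.I
      simp only [one_mul, map_mul, Complex.conj_I] at k1 kI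
      have hc : (starRingEnd ℂ) (deriv φ z) * deriv φ z
          = (r : ℂ) * ((starRingEnd ℂ) (deriv ψ z) * deriv ψ z) := by
        linear_combination (k1 + Complex.I * kI) / 2 +
          (((starRingEnd ℂ) (deriv φ z) * deriv φ z
            - (starRingEnd ℂ) (φ z) * deriv (deriv φ) z
            - (r : ℂ) * ((starRingEnd ℂ) (deriv ψ z) * deriv ψ z)
            + (r : ℂ) * ((starRingEnd ℂ) (ψ z) * deriv (deriv ψ) z)) / 2) * Complex.I_mul_I
      have h1 : (starRingEnd ℂ) (deriv φ z) * deriv φ z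
          = (Complex.normSq (deriv φ z) : ℂ) := by rw [mul_comm, Complex.mul_conj]
      have h2 : (starRingEnd ℂ) (deriv ψ z) * deriv ψ z
          = (Complex.normSq (deriv ψ z) : ℂ) := by rw [mul_comm, Complex.mul_conj]
      rw [h1, h2] at hc
      have : (Complex.normSq (deriv φ z) : ℂ) = (r : ℂ) * (Complex.normSq (deriv ψ z) : ℂ) := hc
      have := congrArg Complex.re this
      simpa using this
    -- Step C : both derivatives vanish on Ω
    have stepC : ∀ z ∈ Ω, deriv φ z = 0 ∧ deriv ψ z = 0 := by
      intro z hz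
      set A := Complex.normSq (φ z) with hA
      set B := Complex.normSq (ψ z) with hB
      set A' := Complex.normSq (deriv φ z) with hA'
      set B' := Complex.normSq (deriv ψ z) with hB'
      have h1 : A * A' = r * r * (B * B') := by
        have := congrArg Complex.normSq (stepA z hz)
        simpa [map_mul, Complex.normSq_conj, Complex.normSq_ofReal, hA, hB, hA', hB',
          mul_assoc, mul_left_comm, mul_comm] using this
      have h2 : A' = r * B' := stepB z hz
      have h3 : A = r * B + s := Hn z hz
      have h4 : s * (r * B') = 0 := by linear_combination h1 - A * h2 - (r * B') * h3
      have hB'0 : B' = 0 := by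
        have h5 : r * B' = 0 := (mul_eq_zero.mp h4).resolve_left hs
        exact (mul_eq_zero.mp h5).resolve_left hr
      have hA'0 : A' = 0 := by rw [h2, hB'0, mul_zero]
      exact ⟨Complex.normSq_eq_zero.mp hA'0, Complex.normSq_eq_zero.mp hB'0⟩
    obtain ⟨z₀, hz₀⟩ := hΩne
    have hφconst := const_of_deriv_eq_zero' hΩo hΩc.isPreconnected hφa
      (fun z hz => (stepC z hz).1) hz₀
    have hψconst := const_of_deriv_eq_zero' hΩo hΩc.isPreconnected hψa
      (fun z hz => (stepC z hz).2) hz₀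
    exact ⟨φ z₀, ψ z₀, H z₀ hz₀, hφconst, hψconst⟩
  · rintro ⟨c₁, c₂, hc, h1, h2⟩ z hz
    rw [h1 z hz, h2 z hz]
    exact hc
end

section
/- Let F₁ + conj(G₁) be a sense preserving harmonic mapping on a simply connected domain Ω ⊆ ℂ such that G₁' = λ·F₁' for some constant λ ∈ ℂ, and let F₂ + conj(G₂) be a harmonic mapping on Ω whose Jacobian equals that of F₁ + conj(G₁), i.e. |F₁'(z)|² − |G₁'(z)|² = |F₂'(z)|² − |G₂'(z)|² for all z ∈ Ω. Then there exist constants α, β ∈ ℂ such that F₂' = α·F₁' and G₂' = β·F₁' on Ω, with |α|² − |β|² = 1 − |λ|² > 0. -/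
open Set

/-- Key algebraic identity: `‖u - a v‖² = (1 - ‖a‖²)(‖u‖² - ‖v‖²) + ‖conj a · u - v‖²`. -/
private lemma key_ident (u v a : ℂ) :
    ‖u - a * v‖ ^ 2 = (1 - ‖a‖ ^ 2) * (‖u‖ ^ 2 - ‖v‖ ^ 2)
      + ‖(starRingEnd ℂ) a * u - v‖ ^ 2 := by
  have h : ∀ z : ℂ, ‖z‖ ^ 2 = Complex.normSq z := by
    intro z; rw [Complex.sq_norm]
  simp only [h, Complex.normSq_apply, Complex.sub_re, Complex.sub_im, Complex.mul_re,
    Complex.mul_im, Complex.one_re, Complex.one_im, Complex.conj_re, Complex.conj_im]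
  ring

set_option maxHeartbeats 1000000 in
/-- **Theorem (linearly dependent case, equal Jacobians).** If `F₁ + conj G₁` is a sense
preserving harmonic map on a simply connected domain `Ω ⊆ ℂ` with `G₁' = λ F₁'`, and
`F₂ + conj G₂` is a harmonic map on `Ω` with the same Jacobian, then `F₂' = α F₁'` and
`G₂' = β F₁'` for constants `α, β` with `|α|² − |β|² = 1 − |λ|² > 0`. -/
theorem stmt_1 (Ω : Set ℂ) (hΩne : Ω.Nonempty) (hΩo : IsOpen Ω) (hΩc : IsConnected Ω)
    (hΩsc : SimplyConnectedSpace Ω)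
    (F₁ G₁ F₂ G₂ : ℂ → ℂ)
    (hF₁ : DifferentiableOn ℂ F₁ Ω) (hG₁ : DifferentiableOn ℂ G₁ Ω)
    (hF₂ : DifferentiableOn ℂ F₂ Ω) (hG₂ : DifferentiableOn ℂ G₂ Ω)
    (hsp : ∀ z ∈ Ω, 0 < ‖deriv F₁ z‖ ^ 2 - ‖deriv G₁ z‖ ^ 2)
    (lam : ℂ) (hlam : ∀ z ∈ Ω, deriv G₁ z = lam * deriv F₁ z)
    (hJ : ∀ z ∈ Ω, ‖deriv F₁ z‖ ^ 2 - ‖deriv G₁ z‖ ^ 2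
        = ‖deriv F₂ z‖ ^ 2 - ‖deriv G₂ z‖ ^ 2) :
    ∃ α β : ℂ, (∀ z ∈ Ω, deriv F₂ z = α * deriv F₁ z ∧ deriv G₂ z = β * deriv F₁ z) ∧
      ‖α‖ ^ 2 - ‖β‖ ^ 2 = 1 - ‖lam‖ ^ 2 ∧ 0 < 1 - ‖lam‖ ^ 2 := by
  obtain ⟨z₀, hz₀⟩ := hΩne
  -- F₁' is nonvanishing on Ω
  have hF₁ne : ∀ z ∈ Ω, deriv F₁ z ≠ 0 := by
    intro z hz h0
    have h1 := hsp z hz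
    rw [h0] at h1
    simp only [norm_zero] at h1
    nlinarith [sq_nonneg ‖deriv G₁ z‖]
  -- the constant c = 1 - ‖lam‖² is positive
  have hc : 0 < 1 - ‖lam‖ ^ 2 := by
    have h1 := hsp z₀ hz₀
    rw [hlam z₀ hz₀, norm_mul, mul_pow] at h1
    have h2 : 0 < ‖deriv F₁ z₀‖ := norm_pos_iff.2 (hF₁ne z₀ hz₀)
    nlinarith
  set c : ℝ := 1 - ‖lam‖ ^ 2 with hc_def
  -- rewrite the Jacobian equality
  have hJc : ∀ z ∈ Ω, ‖deriv F₂ z‖ ^ 2 - ‖deriv G₂ z‖ ^ 2 = c * ‖deriv F₁ z‖ ^ 2 := by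
    intro z hz
    have h1 := hJ z hz
    rw [hlam z hz, norm_mul, mul_pow] at h1
    rw [← h1]; ring
  -- derivatives are differentiable on Ω
  have dF₁' : DifferentiableOn ℂ (deriv F₁) Ω :=
    ((hF₁.analyticOnNhd hΩo).deriv).differentiableOn
  have dF₂' : DifferentiableOn ℂ (deriv F₂) Ω :=
    ((hF₂.analyticOnNhd hΩo).deriv).differentiableOn
  have dG₂' : DifferentiableOn ℂ (deriv G₂) Ω :=
    ((hG₂.analyticOnNhd hΩo).deriv).differentiableOn
  -- the quotients
  set u : ℂ → ℂ := fun z => deriv F₂ z / deriv F₁ z with hu_def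
  set v : ℂ → ℂ := fun z => deriv G₂ z / deriv F₁ z with hv_def
  have hu : DifferentiableOn ℂ u Ω := dF₂'.div dF₁' hF₁ne
  have hv : DifferentiableOn ℂ v Ω := dG₂'.div dF₁' hF₁ne
  have huv : ∀ z ∈ Ω, ‖u z‖ ^ 2 - ‖v z‖ ^ 2 = c := by
    intro z hz
    have hpos : 0 < ‖deriv F₁ z‖ := norm_pos_iff.2 (hF₁ne z hz)
    have h1 := hJc z hz
    simp only [hu_def, hv_def, norm_div, div_pow]
    rw [div_sub_div_same, div_eq_iff (by positivity)]
    linarith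
  have hu₀ : u z₀ ≠ 0 := by
    intro h0
    have h1 := huv z₀ hz₀
    rw [h0] at h1
    simp only [norm_zero] at h1
    nlinarith [sq_nonneg ‖v z₀‖]
  have hu₀pos : 0 < ‖u z₀‖ := norm_pos_iff.2 hu₀
  set a : ℂ := (starRingEnd ℂ) (v z₀ / u z₀) with ha_def
  have hconj_a : (starRingEnd ℂ) a = v z₀ / u z₀ := by
    rw [ha_def, RingHomCompTriple.comp_apply, RingHom.id_apply]
  have ha_norm : ‖a‖ = ‖v z₀‖ / ‖u z₀‖ := by
    rw [ha_def, RingHomIsometric.norm_map, norm_div]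
  have ha_sq : 1 - ‖a‖ ^ 2 = c / ‖u z₀‖ ^ 2 := by
    rw [ha_norm, div_pow, ← huv z₀ hz₀, sub_div, div_self (by positivity)]
  have ha_pos : 0 < 1 - ‖a‖ ^ 2 := by
    rw [ha_sq]; positivity
  -- g = u - a v is nonvanishing and its modulus is minimized at z₀
  set g : ℂ → ℂ := fun z => u z - a * v z with hg_def
  have hg : DifferentiableOn ℂ g Ω := hu.sub ((differentiableOn_const a).mul hv)
  have hg_lb : ∀ z ∈ Ω, (1 - ‖a‖ ^ 2) * c ≤ ‖g z‖ ^ 2 := by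
    intro z hz
    have := key_ident (u z) (v z) a
    rw [huv z hz] at this
    nlinarith [sq_nonneg ‖(starRingEnd ℂ) a * u z - v z‖]
  have hg₀_eq : (starRingEnd ℂ) a * u z₀ - v z₀ = 0 := by
    rw [hconj_a]; field_simp; ring
  have hg₀ : ‖g z₀‖ ^ 2 = (1 - ‖a‖ ^ 2) * c := by
    have := key_ident (u z₀) (v z₀) a
    rw [huv z₀ hz₀, hg₀_eq] at this
    simpa using this
  have hg₀pos : 0 < ‖g z₀‖ := by
    have : 0 < ‖g z₀‖ ^ 2 := by rw [hg₀]; positivity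
    nlinarith [norm_nonneg (g z₀)]
  have hgne : ∀ z ∈ Ω, g z ≠ 0 := by
    intro z hz h0
    have h1 := hg_lb z hz
    rw [h0] at h1
    simp only [norm_zero] at h1
    nlinarith
  have hgmin : ∀ z ∈ Ω, ‖g z₀‖ ≤ ‖g z‖ := by
    intro z hz
    have h1 := hg_lb z hz
    rw [← hg₀] at h1
    nlinarith [norm_nonneg (g z)]
  -- apply the maximum modulus principle to 1/g
  have hginv : DifferentiableOn ℂ (fun z => (g z)⁻¹) Ω := hg.inv hgne
  have hmax : IsMaxOn (norm ∘ fun z => (g z)⁻¹) Ω z₀ := by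
    intro z hz
    simp only [Function.comp_apply, norm_inv, Set.mem_setOf_eq]
    exact inv_anti₀ hg₀pos (hgmin z hz)
  have hconst : ∀ z ∈ Ω, g z = g z₀ := by
    intro z hz
    have := Complex.eqOn_of_isPreconnected_of_isMaxOn_norm hΩc.isPreconnected hΩo hginv hz₀
      hmax hz
    simp only [Function.const_apply] at this
    exact inv_injective this
  -- equality case: v = conj(a) • u on Ω
  have hveq : ∀ z ∈ Ω, v z = (starRingEnd ℂ) a * u z := by
    intro z hz
    have h1 := key_ident (u z) (v z) a
    rw [huv z hz] at h1
    have h2 : ‖g z‖ ^ 2 = (1 - ‖a‖ ^ 2) * c := by rw [hconst z hz, hg₀]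
    have h3 : ‖(starRingEnd ℂ) a * u z - v z‖ ^ 2 = 0 := by
      have : ‖(fun z => u z - a * v z) z‖ ^ 2 = ‖g z‖ ^ 2 := rfl
      nlinarith [h1, h2]
    have h4 : (starRingEnd ℂ) a * u z - v z = 0 := by
      have := sq_eq_zero_iff.mp h3
      exact norm_eq_zero.mp this
    linear_combination -h4
  -- hence ‖u‖ is constant on Ω, so u is constant by max modulus
  have hu_norm : ∀ z ∈ Ω, ‖u z‖ = ‖u z₀‖ := by
    intro z hz
    have h1 := huv z hz
    rw [hveq z hz, norm_mul, mul_pow, RingHomIsometric.norm_map] at h1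
    have h2 : ‖u z‖ ^ 2 * (1 - ‖a‖ ^ 2) = c := by ring_nf; ring_nf at h1; linarith
    have h3 : ‖u z₀‖ ^ 2 * (1 - ‖a‖ ^ 2) = c := by
      have h1' := huv z₀ hz₀
      have : ‖v z₀‖ ^ 2 = ‖a‖ ^ 2 * ‖u z₀‖ ^ 2 := by
        rw [ha_norm, div_pow,
          div_mul_cancel₀ _ (by positivity : (‖u z₀‖ : ℝ) ^ 2 ≠ 0)]
      nlinarith
    have : ‖u z‖ ^ 2 = ‖u z₀‖ ^ 2 := by
      have hne : (1 - ‖a‖ ^ 2) ≠ 0 := ne_of_gt ha_pos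
      exact mul_right_cancel₀ hne (h2.trans h3.symm)
    nlinarith [norm_nonneg (u z), norm_nonneg (u z₀)]
  have humax : IsMaxOn (norm ∘ u) Ω z₀ := by
    intro z hz
    simp only [Function.comp_apply, Set.mem_setOf_eq]
    exact le_of_eq (hu_norm z hz)
  have hu_const : ∀ z ∈ Ω, u z = u z₀ := by
    intro z hz
    simpa using Complex.eqOn_of_isPreconnected_of_isMaxOn_norm hΩc.isPreconnected hΩo hu hz₀
      humax hz
  -- conclude
  refine ⟨u z₀, v z₀, fun z hz => ?_, ?_, hc⟩
  · constructor
    · have : u z * deriv F₁ z = deriv F₂ z := div_mul_cancel₀ _ (hF₁ne z hz)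
      rw [← hu_const z hz, this]
    · have h1 : v z * deriv F₁ z = deriv G₂ z := div_mul_cancel₀ _ (hF₁ne z hz)
      have h2 : v z = v z₀ := by
        rw [hveq z hz, hu_const z hz, ← hveq z₀ hz₀]
      rw [← h2, h1]
  · exact huv z₀ hz₀
end

section
/- Let F₁ + conj(G₁) be a sense preserving harmonic mapping on a simply connected domain Ω ⊆ ℂ such that G₁' = λ·F₁' for some constant λ ∈ ℂ, and let F₂ + conj(G₂) be a harmonic mapping on Ω whose Jacobian equals that of F₁ + conj(G₁). If F₁ + conj(G₁) is univalent (injective) on Ω, then F₂ + conj(G₂) is univalent on Ω. -/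
open Set

/-- A holomorphic function with vanishing derivative on an open preconnected set is constant. -/
lemma stmt_2_aux_const {Ω : Set ℂ} (hΩo : IsOpen Ω) (hΩc : IsPreconnected Ω) {f : ℂ → ℂ}
    (hf : DifferentiableOn ℂ f Ω) (hf' : ∀ z ∈ Ω, deriv f z = 0) {z₀ : ℂ} (hz₀ : z₀ ∈ Ω) :
    ∀ z ∈ Ω, f z = f z₀ := by
  have hfa : AnalyticOnNhd ℂ f Ω := hf.analyticOnNhd hΩo
  have hga : AnalyticOnNhd ℂ (fun _ => f z₀) Ω := analyticOnNhd_const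
  intro z hz
  refine hfa.eqOn_of_preconnected_of_eventuallyEq hga hΩc hz₀ ?_ hz
  obtain ⟨r, hr, hball⟩ := Metric.isOpen_iff.1 hΩo z₀ hz₀
  have key : EqOn f (fun _ => f z₀) (Metric.ball z₀ r) := by
    intro w hw
    refine (convex_ball z₀ r).is_const_of_fderivWithin_eq_zero (hf.mono hball) ?_ hw
      (Metric.mem_ball_self hr)
    intro x hx
    rw [fderivWithin_of_isOpen Metric.isOpen_ball hx]
    ext
    have hdx : DifferentiableAt ℂ f x := hf.differentiableAt (hΩo.mem_nhds (hball hx))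
    simp [← toSpanSingleton_deriv, hf' x (hball hx)]
  exact key.eventuallyEq_of_mem (Metric.isOpen_ball.mem_nhds (Metric.mem_ball_self hr))

/-- Auxiliary map into the 2-dimensional complex Euclidean space. -/
noncomputable def stmt_2_Phi (p q : ℂ → ℂ) (z : ℂ) : EuclideanSpace ℂ (Fin 2) :=
  (WithLp.equiv 2 (Fin 2 → ℂ)).symm ![p z, q z]

/-- Two holomorphic functions on an open preconnected set whose squared norms sum to `1`
are both constant (maximum modulus principle in a strictly convex space). -/
lemma stmt_2_aux_pair {Ω : Set ℂ} (hΩo : IsOpen Ω) (hΩc : IsPreconnected Ω)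
    {p q : ℂ → ℂ} (hp : DifferentiableOn ℂ p Ω) (hq : DifferentiableOn ℂ q Ω)
    (hnorm : ∀ z ∈ Ω, ‖p z‖ ^ 2 + ‖q z‖ ^ 2 = 1) {z₀ : ℂ} (hz₀ : z₀ ∈ Ω) :
    ∀ z ∈ Ω, p z = p z₀ ∧ q z = q z₀ := by
  have hΦd : DifferentiableOn ℂ (stmt_2_Phi p q) Ω := by
    have h1 : DifferentiableOn ℂ (fun z => (![p z, q z] : Fin 2 → ℂ)) Ω := by
      rw [differentiableOn_pi]
      intro i
      fin_cases i <;> simp [hp, hq]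
    exact (EuclideanSpace.equiv (Fin 2) ℂ).symm.differentiable.comp_differentiableOn h1
  have hΦn : ∀ z ∈ Ω, ‖stmt_2_Phi p q z‖ = 1 := by
    intro z hz
    have h2 : ‖stmt_2_Phi p q z‖ ^ 2 = ‖p z‖ ^ 2 + ‖q z‖ ^ 2 := by
      rw [EuclideanSpace.norm_eq, Real.sq_sqrt (by positivity)]
      simp [stmt_2_Phi, Fin.sum_univ_two]
    have h3 : ‖stmt_2_Phi p q z‖ ^ 2 = 1 := by rw [h2, hnorm z hz]
    nlinarith [norm_nonneg (stmt_2_Phi p q z)]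
  have hmax : IsMaxOn (norm ∘ stmt_2_Phi p q) Ω z₀ := by
    intro z hz
    simp only [Function.comp_apply, mem_setOf_eq, hΦn z hz, hΦn z₀ hz₀, le_refl]
  have heq := Complex.eqOn_of_isPreconnected_of_isMaxOn_norm hΩc hΩo hΦd hz₀ hmax
  intro z hz
  have h : stmt_2_Phi p q z = stmt_2_Phi p q z₀ := heq hz
  constructor
  · have := congrArg (fun v : EuclideanSpace ℂ (Fin 2) => v 0) h
    simpa [stmt_2_Phi] using this
  · have := congrArg (fun v : EuclideanSpace ℂ (Fin 2) => v 1) h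
    simpa [stmt_2_Phi] using this

/-- **Theorem (linearly dependent case, preservation of univalence).** If `F₁ + conj G₁`
is a sense preserving harmonic map on a simply connected domain `Ω ⊆ ℂ` with
`G₁' = λ F₁'`, `F₂ + conj G₂` is a harmonic map on `Ω` with the same Jacobian, and
`F₁ + conj G₁` is univalent on `Ω`, then `F₂ + conj G₂` is univalent on `Ω`. -/
theorem stmt_2 (Ω : Set ℂ) (hΩne : Ω.Nonempty) (hΩo : IsOpen Ω) (hΩc : IsConnected Ω)
    (hΩsc : SimplyConnectedSpace Ω)
    (F₁ G₁ F₂ G₂ : ℂ → ℂ)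
    (hF₁ : DifferentiableOn ℂ F₁ Ω) (hG₁ : DifferentiableOn ℂ G₁ Ω)
    (hF₂ : DifferentiableOn ℂ F₂ Ω) (hG₂ : DifferentiableOn ℂ G₂ Ω)
    (hsp : ∀ z ∈ Ω, 0 < ‖deriv F₁ z‖ ^ 2 - ‖deriv G₁ z‖ ^ 2)
    (lam : ℂ) (hlam : ∀ z ∈ Ω, deriv G₁ z = lam * deriv F₁ z)
    (hJ : ∀ z ∈ Ω, ‖deriv F₁ z‖ ^ 2 - ‖deriv G₁ z‖ ^ 2
        = ‖deriv F₂ z‖ ^ 2 - ‖deriv G₂ z‖ ^ 2)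
    (huniv : Set.InjOn (fun z => F₁ z + (starRingEnd ℂ) (G₁ z)) Ω) :
    Set.InjOn (fun z => F₂ z + (starRingEnd ℂ) (G₂ z)) Ω := by
  obtain ⟨z₀, hz₀⟩ := hΩne
  have hΩpc : IsPreconnected Ω := hΩc.isPreconnected
  -- nonvanishing of derivatives
  have hF₁' : ∀ z ∈ Ω, deriv F₁ z ≠ 0 := by
    intro z hz h0
    have h1 := hsp z hz
    rw [h0, norm_zero] at h1
    nlinarith [sq_nonneg ‖deriv G₁ z‖]
  have hF₂' : ∀ z ∈ Ω, deriv F₂ z ≠ 0 := by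
    intro z hz h0
    have h1 := hsp z hz
    have h2 := hJ z hz
    rw [h0, norm_zero] at h2
    nlinarith [sq_nonneg ‖deriv G₂ z‖]
  -- |lam| < 1
  have hC : 0 < 1 - ‖lam‖ ^ 2 := by
    have h1 := hsp z₀ hz₀
    have h2 : ‖deriv G₁ z₀‖ = ‖lam‖ * ‖deriv F₁ z₀‖ := by rw [hlam z₀ hz₀, norm_mul]
    have h3 : 0 < ‖deriv F₁ z₀‖ := norm_pos_iff.2 (hF₁' z₀ hz₀)
    rw [h2] at h1
    nlinarith [mul_pos h3 h3, sq_nonneg ‖lam‖]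
  set C : ℝ := 1 - ‖lam‖ ^ 2 with hCdef
  set μ : ℝ := Real.sqrt C with hμdef
  have hμpos : 0 < μ := Real.sqrt_pos.2 hC
  have hμsq : μ ^ 2 = C := Real.sq_sqrt hC.le
  -- the holomorphic pair
  set p : ℂ → ℂ := fun z => deriv G₂ z / deriv F₂ z with hpdef
  set q : ℂ → ℂ := fun z => (μ : ℂ) * (deriv F₁ z / deriv F₂ z) with hqdef
  have hdF₁ : DifferentiableOn ℂ (deriv F₁) Ω :=
    ((hF₁.analyticOnNhd hΩo).deriv).differentiableOn
  have hdF₂ : DifferentiableOn ℂ (deriv F₂) Ω :=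
    ((hF₂.analyticOnNhd hΩo).deriv).differentiableOn
  have hdG₂ : DifferentiableOn ℂ (deriv G₂) Ω :=
    ((hG₂.analyticOnNhd hΩo).deriv).differentiableOn
  have hpd : DifferentiableOn ℂ p Ω := hdG₂.div hdF₂ hF₂'
  have hqd : DifferentiableOn ℂ q Ω :=
    (differentiableOn_const _).mul (hdF₁.div hdF₂ hF₂')
  -- the norm identity
  have hnorm : ∀ z ∈ Ω, ‖p z‖ ^ 2 + ‖q z‖ ^ 2 = 1 := by
    intro z hz
    have h1 := hJ z hz
    have h2 : ‖deriv G₁ z‖ = ‖lam‖ * ‖deriv F₁ z‖ := by rw [hlam z hz, norm_mul]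
    have h3 : 0 < ‖deriv F₂ z‖ := norm_pos_iff.2 (hF₂' z hz)
    have hp1 : ‖p z‖ = ‖deriv G₂ z‖ / ‖deriv F₂ z‖ := by
      simp [hpdef, norm_div]
    have hq1 : ‖q z‖ = μ * (‖deriv F₁ z‖ / ‖deriv F₂ z‖) := by
      simp only [hqdef, norm_mul, norm_div, Complex.norm_real, Real.norm_eq_abs,
        abs_of_pos hμpos]
    have h4 : ‖deriv G₂ z‖ ^ 2 + μ ^ 2 * ‖deriv F₁ z‖ ^ 2 = ‖deriv F₂ z‖ ^ 2 := by
      rw [h2] at h1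
      rw [hμsq, hCdef]
      nlinarith
    have h5 : ‖deriv F₂ z‖ ≠ 0 := h3.ne'
    have h6 : (‖deriv G₂ z‖ / ‖deriv F₂ z‖) ^ 2 + (μ * (‖deriv F₁ z‖ / ‖deriv F₂ z‖)) ^ 2
        = (‖deriv G₂ z‖ ^ 2 + μ ^ 2 * ‖deriv F₁ z‖ ^ 2) / ‖deriv F₂ z‖ ^ 2 := by
      field_simp [h5]
    rw [hp1, hq1, h6, h4]
    exact div_self (by positivity)
  obtain hpair := stmt_2_aux_pair hΩo hΩpc hpd hqd hnorm hz₀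
  -- constants
  set w₀ : ℂ := p z₀ with hw₀def
  set a : ℂ := deriv F₁ z₀ / deriv F₂ z₀ with hadef
  have ha0 : a ≠ 0 := div_ne_zero (hF₁' z₀ hz₀) (hF₂' z₀ hz₀)
  have hqz₀ : q z₀ = (μ : ℂ) * a := rfl
  -- ‖w₀‖ < 1
  have hw₀lt : ‖w₀‖ < 1 := by
    have h1 := hnorm z₀ hz₀
    have h2 : 0 < ‖q z₀‖ := by
      rw [hqz₀]
      have : ((μ : ℂ) * a) ≠ 0 := mul_ne_zero (by exact_mod_cast hμpos.ne') ha0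
      exact norm_pos_iff.2 this
    nlinarith [norm_nonneg (p z₀), norm_nonneg (q z₀)]
  -- derivative relations:  deriv F₁ = a * deriv F₂,  deriv G₂ = w₀ * deriv F₂ on Ω
  have hder₁ : ∀ z ∈ Ω, deriv F₁ z = a * deriv F₂ z := by
    intro z hz
    have h := (hpair z hz).2
    have hμ0 : (μ : ℂ) ≠ 0 := by exact_mod_cast hμpos.ne'
    have h' : deriv F₁ z / deriv F₂ z = a := by
      have := mul_left_cancel₀ hμ0 h
      simpa [hadef] using this
    rw [div_eq_iff (hF₂' z hz)] at h'
    exact h'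
  have hder₂ : ∀ z ∈ Ω, deriv G₂ z = w₀ * deriv F₂ z := by
    intro z hz
    have h := (hpair z hz).1
    have h' : deriv G₂ z / deriv F₂ z = w₀ := h
    rw [div_eq_iff (hF₂' z hz)] at h'
    exact h'
  -- antiderivative relations
  have hcF₂ : ∀ z ∈ Ω, F₂ z - a⁻¹ * F₁ z = F₂ z₀ - a⁻¹ * F₁ z₀ := by
    refine stmt_2_aux_const hΩo hΩpc (hF₂.sub ((differentiableOn_const _).mul hF₁)) ?_ hz₀
    intro z hz
    have h₂ : DifferentiableAt ℂ F₂ z := hF₂.differentiableAt (hΩo.mem_nhds hz)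
    have h₁ : DifferentiableAt ℂ F₁ z := hF₁.differentiableAt (hΩo.mem_nhds hz)
    change deriv (fun y => F₂ y - a⁻¹ * F₁ y) z = 0
    rw [deriv_fun_sub h₂ (h₁.const_mul _), deriv_const_mul _ h₁, hder₁ z hz]
    field_simp
    ring
  have hcG₂ : ∀ z ∈ Ω, G₂ z - (w₀ * a⁻¹) * F₁ z = G₂ z₀ - (w₀ * a⁻¹) * F₁ z₀ := by
    refine stmt_2_aux_const hΩo hΩpc (hG₂.sub ((differentiableOn_const _).mul hF₁)) ?_ hz₀
    intro z hz
    have h₂ : DifferentiableAt ℂ G₂ z := hG₂.differentiableAt (hΩo.mem_nhds hz)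
    have h₁ : DifferentiableAt ℂ F₁ z := hF₁.differentiableAt (hΩo.mem_nhds hz)
    change deriv (fun y => G₂ y - (w₀ * a⁻¹) * F₁ y) z = 0
    rw [deriv_fun_sub h₂ (h₁.const_mul _), deriv_const_mul _ h₁, hder₂ z hz, hder₁ z hz]
    field_simp
    ring
  have hcG₁ : ∀ z ∈ Ω, G₁ z - lam * F₁ z = G₁ z₀ - lam * F₁ z₀ := by
    refine stmt_2_aux_const hΩo hΩpc (hG₁.sub ((differentiableOn_const _).mul hF₁)) ?_ hz₀
    intro z hz
    have h₂ : DifferentiableAt ℂ G₁ z := hG₁.differentiableAt (hΩo.mem_nhds hz)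
    have h₁ : DifferentiableAt ℂ F₁ z := hF₁.differentiableAt (hΩo.mem_nhds hz)
    change deriv (fun y => G₁ y - lam * F₁ y) z = 0
    rw [deriv_fun_sub h₂ (h₁.const_mul _), deriv_const_mul _ h₁, hlam z hz]
    ring
  -- injectivity
  intro z hz z' hz' hE
  have hE' : F₂ z + (starRingEnd ℂ) (G₂ z) = F₂ z' + (starRingEnd ℂ) (G₂ z') := hE
  have e₂ := (hcF₂ z hz).trans (hcF₂ z' hz').symm
  have e₃ := (hcG₂ z hz).trans (hcG₂ z' hz').symm
  set u : ℂ := F₁ z - F₁ z' with hu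
  have hF₂diff : F₂ z - F₂ z' = a⁻¹ * u := by rw [hu]; linear_combination e₂
  have hG₂diff : G₂ z - G₂ z' = (w₀ * a⁻¹) * u := by rw [hu]; linear_combination e₃
  have hkey : a⁻¹ * u + (starRingEnd ℂ) ((w₀ * a⁻¹) * u) = 0 := by
    have h0 : (F₂ z - F₂ z') + (starRingEnd ℂ) (G₂ z - G₂ z') = 0 := by
      rw [map_sub]
      linear_combination hE'
    rw [hF₂diff, hG₂diff] at h0
    exact h0
  have hu0 : u = 0 := by
    by_contra hne
    have h1 : ‖a⁻¹ * u‖ = ‖(starRingEnd ℂ) ((w₀ * a⁻¹) * u)‖ := by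
      have h2 : a⁻¹ * u = -(starRingEnd ℂ) ((w₀ * a⁻¹) * u) := by linear_combination hkey
      rw [h2, norm_neg]
    rw [RCLike.norm_conj, norm_mul, norm_mul, norm_mul] at h1
    have hai : 0 < ‖a⁻¹‖ := norm_pos_iff.2 (inv_ne_zero ha0)
    have hun : 0 < ‖u‖ := norm_pos_iff.2 hne
    nlinarith [mul_pos (by linarith : (0:ℝ) < 1 - ‖w₀‖) (mul_pos hai hun)]
  have hF₁eq : F₁ z = F₁ z' := by rwa [hu, sub_eq_zero] at hu0
  have hG₁eq : G₁ z = G₁ z' := by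
    have e₁ := (hcG₁ z hz).trans (hcG₁ z' hz').symm
    linear_combination e₁ + lam * hF₁eq
  exact huniv hz hz' (by simp [hF₁eq, hG₁eq])
end

section
/- Let F₁ + conj(G₁) and F₂ + conj(G₂) be two harmonic mappings on a simply connected domain Ω ⊆ ℂ, with Jacobians J₁ = |F₁'|² − |G₁'|² and J₂ = |F₂'|² − |G₂'|² respectively. Assume that F₁' and G₁' are linearly independent over ℂ. If J₁(z) = J₂(z) > 0 for all z ∈ Ω, then there exist complex constants α, β with |α|² = 1 + |β|² and a real number ξ such that F₂' = α·F₁' + β·e^{iξ}·G₁' and G₂' = conj(β)·F₁' + conj(α)·e^{iξ}·G₁' on Ω. -/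
open Set Complex ComplexConjugate

private lemma term_fderiv {Ω : Set ℂ} (hΩo : IsOpen Ω) {u v : ℂ → ℂ}
    (hu : DifferentiableOn ℂ u Ω) (hv : DifferentiableOn ℂ v Ω)
    {z : ℂ} (hz : z ∈ Ω) :
    HasFDerivAt (fun y => u y * conj (v y))
      ((u z • ((conjCLE : ℂ →L[ℝ] ℂ).comp
          ((ContinuousLinearMap.smulRight (1 : ℂ →L[ℂ] ℂ) (deriv v z)).restrictScalars ℝ)))
        + conj (v z) • ((ContinuousLinearMap.smulRight (1 : ℂ →L[ℂ] ℂ) (deriv u z)).restrictScalars ℝ)) z := by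
  have memn := hΩo.mem_nhds hz
  have du : HasDerivAt u (deriv u z) z := (hu.differentiableAt memn).hasDerivAt
  have dv : HasDerivAt v (deriv v z) z := (hv.differentiableAt memn).hasDerivAt
  exact ((du.hasFDerivAt).restrictScalars ℝ).mul
    (((conjCLE : ℂ →L[ℝ] ℂ).hasFDerivAt).comp z ((dv.hasFDerivAt).restrictScalars ℝ))

private lemma wirtinger_split {Ω : Set ℂ} (hΩo : IsOpen Ω)
    {u₁ u₂ u₃ u₄ v₁ v₂ v₃ v₄ : ℂ → ℂ}
    (hu₁ : DifferentiableOn ℂ u₁ Ω) (hu₂ : DifferentiableOn ℂ u₂ Ω)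
    (hu₃ : DifferentiableOn ℂ u₃ Ω) (hu₄ : DifferentiableOn ℂ u₄ Ω)
    (hv₁ : DifferentiableOn ℂ v₁ Ω) (hv₂ : DifferentiableOn ℂ v₂ Ω)
    (hv₃ : DifferentiableOn ℂ v₃ Ω) (hv₄ : DifferentiableOn ℂ v₄ Ω)
    (h0 : ∀ z ∈ Ω, u₁ z * conj (v₁ z) - u₂ z * conj (v₂ z)
      - u₃ z * conj (v₃ z) + u₄ z * conj (v₄ z) = 0) :
    ∀ z ∈ Ω, deriv u₁ z * conj (v₁ z) - deriv u₂ z * conj (v₂ z)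
      - deriv u₃ z * conj (v₃ z) + deriv u₄ z * conj (v₄ z) = 0 := by
  intro z hz
  have memn := hΩo.mem_nhds hz
  have T := (((term_fderiv hΩo hu₁ hv₁ hz).sub (term_fderiv hΩo hu₂ hv₂ hz)).sub
    (term_fderiv hΩo hu₃ hv₃ hz)).add (term_fderiv hΩo hu₄ hv₄ hz)
  have hS0 : HasFDerivAt (fun y => u₁ y * conj (v₁ y) - u₂ y * conj (v₂ y)
      - u₃ y * conj (v₃ y) + u₄ y * conj (v₄ y)) (0 : ℂ →L[ℝ] ℂ) z :=
    (hasFDerivAt_const (0 : ℂ) z).congr_of_eventuallyEq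
      (by filter_upwards [memn] with y hy using h0 y hy)
  have hL := T.unique hS0
  have e1 := congrFun (congrArg (fun (f : ℂ →L[ℝ] ℂ) => (f : ℂ → ℂ)) hL) 1
  have eI := congrFun (congrArg (fun (f : ℂ →L[ℝ] ℂ) => (f : ℂ → ℂ)) hL) Complex.I
  simp only [ContinuousLinearMap.add_apply, ContinuousLinearMap.sub_apply,
    ContinuousLinearMap.smul_apply, ContinuousLinearMap.coe_comp', Function.comp_apply,
    ContinuousLinearMap.coe_restrictScalars', ContinuousLinearMap.smulRight_apply,
    ContinuousLinearMap.one_apply, ContinuousLinearEquiv.coe_coe, conjCLE_apply,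
    ContinuousLinearMap.zero_apply, smul_eq_mul, map_mul, one_mul, mul_one] at e1 eI
  rw [Complex.conj_I] at eI
  set A := deriv u₁ z * conj (v₁ z) - deriv u₂ z * conj (v₂ z)
      - deriv u₃ z * conj (v₃ z) + deriv u₄ z * conj (v₄ z) with hA
  set C := u₁ z * conj (deriv v₁ z) - u₂ z * conj (deriv v₂ z)
      - u₃ z * conj (deriv v₃ z) + u₄ z * conj (deriv v₄ z) with hC
  have h1 : A + C = 0 := by rw [hA, hC]; linear_combination e1
  have h2 : Complex.I * A - Complex.I * C = 0 := by rw [hA, hC]; linear_combination eI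
  have h3 : A - C = 0 := by
    have : Complex.I * (A - C) = 0 := by linear_combination h2
    rcases mul_eq_zero.mp this with h | h
    · exact absurd h Complex.I_ne_zero
    · exact h
  linear_combination (h1 + h3) / 2

private lemma iter_analytic {Ω : Set ℂ} (hΩo : IsOpen Ω) {u : ℂ → ℂ}
    (hu : AnalyticOnNhd ℂ u Ω) (m : ℕ) : AnalyticOnNhd ℂ (iteratedDeriv m u) Ω := by
  induction m with
  | zero => simpa [iteratedDeriv_zero] using hu
  | succ n ih => rw [iteratedDeriv_succ]; exact ih.deriv

private lemma split_iter {Ω : Set ℂ} (hΩo : IsOpen Ω)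
    {u₁ u₂ u₃ u₄ v₁ v₂ v₃ v₄ : ℂ → ℂ}
    (hu₁ : AnalyticOnNhd ℂ u₁ Ω) (hu₂ : AnalyticOnNhd ℂ u₂ Ω)
    (hu₃ : AnalyticOnNhd ℂ u₃ Ω) (hu₄ : AnalyticOnNhd ℂ u₄ Ω)
    (hv₁ : DifferentiableOn ℂ v₁ Ω) (hv₂ : DifferentiableOn ℂ v₂ Ω)
    (hv₃ : DifferentiableOn ℂ v₃ Ω) (hv₄ : DifferentiableOn ℂ v₄ Ω)
    (h0 : ∀ z ∈ Ω, u₁ z * conj (v₁ z) - u₂ z * conj (v₂ z)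
      - u₃ z * conj (v₃ z) + u₄ z * conj (v₄ z) = 0) (m : ℕ) :
    ∀ z ∈ Ω, iteratedDeriv m u₁ z * conj (v₁ z) - iteratedDeriv m u₂ z * conj (v₂ z)
      - iteratedDeriv m u₃ z * conj (v₃ z) + iteratedDeriv m u₄ z * conj (v₄ z) = 0 := by
  induction m with
  | zero => simpa [iteratedDeriv_zero] using h0
  | succ n ih =>
      simp only [iteratedDeriv_succ]
      exact wirtinger_split hΩo
        (iter_analytic hΩo hu₁ n).differentiableOn (iter_analytic hΩo hu₂ n).differentiableOn
        (iter_analytic hΩo hu₃ n).differentiableOn (iter_analytic hΩo hu₄ n).differentiableOn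
        hv₁ hv₂ hv₃ hv₄ ih

private lemma iter_comb {Ω : Set ℂ} (hΩo : IsOpen Ω) {u₁ u₂ u₃ u₄ : ℂ → ℂ}
    (h₁ : AnalyticOnNhd ℂ u₁ Ω) (h₂ : AnalyticOnNhd ℂ u₂ Ω)
    (h₃ : AnalyticOnNhd ℂ u₃ Ω) (h₄ : AnalyticOnNhd ℂ u₄ Ω)
    (c₁ c₂ c₃ c₄ : ℂ) (m : ℕ) :
    ∀ z ∈ Ω, iteratedDeriv m (fun y => c₁ * u₁ y + c₂ * u₂ y + c₃ * u₃ y + c₄ * u₄ y) z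
      = c₁ * iteratedDeriv m u₁ z + c₂ * iteratedDeriv m u₂ z
        + c₃ * iteratedDeriv m u₃ z + c₄ * iteratedDeriv m u₄ z := by
  induction m with
  | zero => intro z hz; simp [iteratedDeriv_zero]
  | succ n ih =>
      intro z hz
      simp only [iteratedDeriv_succ]
      have hev : deriv (iteratedDeriv n (fun y => c₁ * u₁ y + c₂ * u₂ y + c₃ * u₃ y + c₄ * u₄ y)) z
          = deriv (fun y => c₁ * iteratedDeriv n u₁ y + c₂ * iteratedDeriv n u₂ y
            + c₃ * iteratedDeriv n u₃ y + c₄ * iteratedDeriv n u₄ y) z := by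
        apply Filter.EventuallyEq.deriv_eq
        filter_upwards [hΩo.mem_nhds hz] with y hy using ih y hy
      rw [hev]
      have d₁ : HasDerivAt (iteratedDeriv n u₁) (deriv (iteratedDeriv n u₁) z) z :=
        ((iter_analytic hΩo h₁ n) z hz).differentiableAt.hasDerivAt
      have d₂ : HasDerivAt (iteratedDeriv n u₂) (deriv (iteratedDeriv n u₂) z) z :=
        ((iter_analytic hΩo h₂ n) z hz).differentiableAt.hasDerivAt
      have d₃ : HasDerivAt (iteratedDeriv n u₃) (deriv (iteratedDeriv n u₃) z) z :=
        ((iter_analytic hΩo h₃ n) z hz).differentiableAt.hasDerivAt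
      have d₄ : HasDerivAt (iteratedDeriv n u₄) (deriv (iteratedDeriv n u₄) z) z :=
        ((iter_analytic hΩo h₄ n) z hz).differentiableAt.hasDerivAt
      have := (((d₁.const_mul c₁).add (d₂.const_mul c₂)).add (d₃.const_mul c₃)).add
        (d₄.const_mul c₄)
      exact this.deriv

private lemma eq_zero_of_iteratedDeriv_zero {Ω : Set ℂ} (hc : IsPreconnected Ω) {f : ℂ → ℂ}
    (hf : AnalyticOnNhd ℂ f Ω) {w : ℂ} (hw : w ∈ Ω) (hd : ∀ m, iteratedDeriv m f w = 0) :
    ∀ z ∈ Ω, f z = 0 := by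
  have hA : AnalyticAt ℂ f w := hf w hw
  obtain ⟨p, hp⟩ := hA
  obtain ⟨r, hr⟩ := hp
  have ev : ∀ᶠ z in nhds w, f z = 0 := by
    filter_upwards [EMetric.ball_mem_nhds w hr.r_pos] with z hz
    have hy : z - w ∈ Metric.eball (0 : ℂ) r := by
      simpa [Metric.mem_eball, edist_eq_enorm_sub] using hz
    have hs := hr.hasSum_iteratedFDeriv hy
    have hterm : ∀ n : ℕ, ((n.factorial : ℂ))⁻¹ • (iteratedFDeriv ℂ n f w fun _ => z - w)
        = (0 : ℂ) := by
      intro n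
      rw [iteratedFDeriv_apply_eq_iteratedDeriv_mul_prod, hd n]
      simp
    have hs' : HasSum (fun _ : ℕ => (0 : ℂ)) (f (w + (z - w))) := by
      simpa only [hterm] using hs
    have := hasSum_zero.unique hs'
    simpa using this.symm
  exact fun z hz => hf.eqOn_zero_of_preconnected_of_eventuallyEq_zero hc hw ev hz

private lemma polarized {Ω : Set ℂ} (hΩo : IsOpen Ω) (hc : IsPreconnected Ω)
    {f₁ g₁ f₂ g₂ : ℂ → ℂ}
    (a₁ : AnalyticOnNhd ℂ f₁ Ω) (a₂ : AnalyticOnNhd ℂ g₁ Ω)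
    (a₃ : AnalyticOnNhd ℂ f₂ Ω) (a₄ : AnalyticOnNhd ℂ g₂ Ω)
    (h0 : ∀ z ∈ Ω, f₁ z * conj (f₁ z) - g₁ z * conj (g₁ z)
      - f₂ z * conj (f₂ z) + g₂ z * conj (g₂ z) = 0) :
    ∀ z ∈ Ω, ∀ w ∈ Ω, f₁ z * conj (f₁ w) - g₁ z * conj (g₁ w)
      - f₂ z * conj (f₂ w) + g₂ z * conj (g₂ w) = 0 := by
  intro z hz w hw
  have hsplit := split_iter hΩo a₁ a₂ a₃ a₄
    a₁.differentiableOn a₂.differentiableOn a₃.differentiableOn a₄.differentiableOn h0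
  have hh : AnalyticOnNhd ℂ (fun y => conj (f₁ w) * f₁ y + (-conj (g₁ w)) * g₁ y
      + (-conj (f₂ w)) * f₂ y + conj (g₂ w) * g₂ y) Ω :=
    (((analyticOnNhd_const.mul a₁).add (analyticOnNhd_const.mul a₂)).add
      (analyticOnNhd_const.mul a₃)).add (analyticOnNhd_const.mul a₄)
  have hd : ∀ m : ℕ, iteratedDeriv m (fun y => conj (f₁ w) * f₁ y + (-conj (g₁ w)) * g₁ y
      + (-conj (f₂ w)) * f₂ y + conj (g₂ w) * g₂ y) w = 0 := by
    intro m
    rw [iter_comb hΩo a₁ a₂ a₃ a₄ _ _ _ _ m w hw]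
    linear_combination hsplit m w hw
  have := eq_zero_of_iteratedDeriv_zero hc hh hw hd z hz
  linear_combination this

/-- **Theorem (linearly independent case, equal Jacobians).** -/
theorem stmt_3 (Ω : Set ℂ) (hΩne : Ω.Nonempty) (hΩo : IsOpen Ω) (hΩc : IsConnected Ω)
    (hΩsc : SimplyConnectedSpace Ω)
    (F₁ G₁ F₂ G₂ : ℂ → ℂ)
    (hF₁ : DifferentiableOn ℂ F₁ Ω) (hG₁ : DifferentiableOn ℂ G₁ Ω)
    (hF₂ : DifferentiableOn ℂ F₂ Ω) (hG₂ : DifferentiableOn ℂ G₂ Ω)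
    (hindep : ¬ ∃ a b : ℂ, (a, b) ≠ (0, 0) ∧
      ∀ z ∈ Ω, a * deriv F₁ z + b * deriv G₁ z = 0)
    (hJ : ∀ z ∈ Ω, ‖deriv F₁ z‖ ^ 2 - ‖deriv G₁ z‖ ^ 2
        = ‖deriv F₂ z‖ ^ 2 - ‖deriv G₂ z‖ ^ 2)
    (hJpos : ∀ z ∈ Ω, 0 < ‖deriv F₁ z‖ ^ 2 - ‖deriv G₁ z‖ ^ 2) :
    ∃ (α β : ℂ) (ξ : ℝ), ‖α‖ ^ 2 = 1 + ‖β‖ ^ 2 ∧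
      ∀ z ∈ Ω,
        deriv F₂ z = α * deriv F₁ z + β * Complex.exp ((ξ : ℂ) * Complex.I) * deriv G₁ z ∧
        deriv G₂ z = (starRingEnd ℂ) β * deriv F₁ z
          + (starRingEnd ℂ) α * Complex.exp ((ξ : ℂ) * Complex.I) * deriv G₁ z := by
  set f₁ := deriv F₁ with hf₁def
  set g₁ := deriv G₁ with hg₁def
  set f₂ := deriv F₂ with hf₂def
  set g₂ := deriv G₂ with hg₂def
  have a₁ : AnalyticOnNhd ℂ f₁ Ω := (hF₁.analyticOnNhd hΩo).deriv
  have a₂ : AnalyticOnNhd ℂ g₁ Ω := (hG₁.analyticOnNhd hΩo).deriv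
  have a₃ : AnalyticOnNhd ℂ f₂ Ω := (hF₂.analyticOnNhd hΩo).deriv
  have a₄ : AnalyticOnNhd ℂ g₂ Ω := (hG₂.analyticOnNhd hΩo).deriv
  have hind : ∀ A B : ℂ, (∀ z ∈ Ω, A * f₁ z + B * g₁ z = 0) → A = 0 ∧ B = 0 := by
    intro A B h
    by_contra hAB
    apply hindep
    refine ⟨A, B, ?_, h⟩
    simp only [ne_eq, Prod.mk.injEq]
    tauto
  have hf₁ne : ∀ z ∈ Ω, f₁ z ≠ 0 := by
    intro z hz h
    have := hJpos z hz
    rw [h] at this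
    simp only [norm_zero] at this
    nlinarith [sq_nonneg ‖g₁ z‖]
  have mc : ∀ x : ℂ, ((‖x‖ : ℝ) ^ 2 : ℂ) = x * conj x := by
    intro x
    rw [Complex.mul_conj]
    norm_cast
    rw [Complex.sq_norm]
  have h0 : ∀ z ∈ Ω, f₁ z * conj (f₁ z) - g₁ z * conj (g₁ z)
      - f₂ z * conj (f₂ z) + g₂ z * conj (g₂ z) = 0 := by
    intro z hz
    have h := hJ z hz
    have h' := congrArg (fun t : ℝ => (t : ℂ)) h
    push_cast at h'
    rw [mc, mc, mc, mc] at h'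
    linear_combination h'
  have pol := polarized hΩo hΩc.isPreconnected a₁ a₂ a₃ a₄ h0
  obtain ⟨w₁, hw₁⟩ := hΩne
  have hw2ex : ∃ w ∈ Ω, f₁ w₁ * g₁ w - g₁ w₁ * f₁ w ≠ 0 := by
    by_contra hcon
    push_neg at hcon
    have h := hind (-(g₁ w₁)) (f₁ w₁) (fun w hw => by linear_combination hcon w hw)
    exact hf₁ne w₁ hw₁ h.2
  obtain ⟨w₂, hw₂, hD⟩ := hw2ex
  set p₁ := conj (f₂ w₁) with hp₁def
  set q₁ := conj (g₂ w₁) with hq₁def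
  set p₂ := conj (f₂ w₂) with hp₂def
  set q₂ := conj (g₂ w₂) with hq₂def
  set r₁ := conj (f₁ w₁) with hr₁def
  set s₁ := conj (g₁ w₁) with hs₁def
  set r₂ := conj (f₁ w₂) with hr₂def
  set s₂ := conj (g₁ w₂) with hs₂def
  have E₁ : ∀ z ∈ Ω, p₁ * f₂ z - q₁ * g₂ z = r₁ * f₁ z - s₁ * g₁ z := by
    intro z hz; linear_combination -pol z hz w₁ hw₁
  have E₂ : ∀ z ∈ Ω, p₂ * f₂ z - q₂ * g₂ z = r₂ * f₁ z - s₂ * g₁ z := by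
    intro z hz; linear_combination -pol z hz w₂ hw₂
  have hdetN : r₁ * s₂ - s₁ * r₂ ≠ 0 := by
    intro h
    apply hD
    have h2 : conj (f₁ w₁ * g₁ w₂ - g₁ w₁ * f₁ w₂) = 0 := by
      rw [map_sub, map_mul, map_mul]; exact h
    simpa using congrArg conj h2
  have hΔ : p₁ * q₂ - q₁ * p₂ ≠ 0 := by
    intro h
    have hq := hind (q₂ * r₁ - q₁ * r₂) (-(q₂ * s₁) + q₁ * s₂) (fun z hz => by
      linear_combination -(q₂ * E₁ z hz) + q₁ * E₂ z hz + f₂ z * h)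
    have hp := hind (p₂ * r₁ - p₁ * r₂) (-(p₂ * s₁) + p₁ * s₂) (fun z hz => by
      linear_combination -(p₂ * E₁ z hz) + p₁ * E₂ z hz + g₂ z * h)
    have hq2 : q₂ = 0 := by
      have h2 : q₂ * (r₁ * s₂ - s₁ * r₂) = 0 := by linear_combination s₂ * hq.1 + r₂ * hq.2
      rcases mul_eq_zero.mp h2 with h3 | h3
      · exact h3
      · exact absurd h3 hdetN
    have hp2 : p₂ = 0 := by
      have h2 : p₂ * (r₁ * s₂ - s₁ * r₂) = 0 := by linear_combination s₂ * hp.1 + r₂ * hp.2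
      rcases mul_eq_zero.mp h2 with h3 | h3
      · exact h3
      · exact absurd h3 hdetN
    have hq1 : q₁ = 0 ∨ (r₂ = 0 ∧ s₂ = 0) := by
      by_cases hq1 : q₁ = 0
      · exact Or.inl hq1
      · refine Or.inr ⟨?_, ?_⟩
        · have := hq.1; rw [hq2] at this
          have h4 : q₁ * r₂ = 0 := by linear_combination -this
          rcases mul_eq_zero.mp h4 with h5 | h5
          · exact absurd h5 hq1
          · exact h5
        · have := hq.2; rw [hq2] at this
          have h4 : q₁ * s₂ = 0 := by linear_combination this
          rcases mul_eq_zero.mp h4 with h5 | h5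
          · exact absurd h5 hq1
          · exact h5
    have hp1 : p₁ = 0 ∨ (r₂ = 0 ∧ s₂ = 0) := by
      by_cases hp1 : p₁ = 0
      · exact Or.inl hp1
      · refine Or.inr ⟨?_, ?_⟩
        · have := hp.1; rw [hp2] at this
          have h4 : p₁ * r₂ = 0 := by linear_combination -this
          rcases mul_eq_zero.mp h4 with h5 | h5
          · exact absurd h5 hp1
          · exact h5
        · have := hp.2; rw [hp2] at this
          have h4 : p₁ * s₂ = 0 := by linear_combination this
          rcases mul_eq_zero.mp h4 with h5 | h5
          · exact absurd h5 hp1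
          · exact h5
    rcases hq1 with hq1 | ⟨hr2, hs2⟩
    · rcases hp1 with hp1 | ⟨hr2, hs2⟩
      · -- all of p₁ q₁ p₂ q₂ zero : E₁ gives r₁ f₁ - s₁ g₁ = 0
        have := hind r₁ (-s₁) (fun z hz => by
          linear_combination -(E₁ z hz) + f₂ z * hp1 - g₂ z * hq1)
        have hr1 : r₁ = 0 := this.1
        apply hf₁ne w₁ hw₁
        have : conj (f₁ w₁) = 0 := hr1
        simpa using congrArg conj this
      · exact hdetN (by rw [hr2, hs2]; ring)
    · exact hdetN (by rw [hr2, hs2]; ring)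
  -- solve for f₂, g₂ as combinations of f₁, g₁
  obtain ⟨a, b, c, d, hf₂e, hg₂e⟩ : ∃ a b c d : ℂ,
      (∀ z ∈ Ω, f₂ z = a * f₁ z + b * g₁ z) ∧ (∀ z ∈ Ω, g₂ z = c * f₁ z + d * g₁ z) := by
    refine ⟨(q₂ * r₁ - q₁ * r₂) / (p₁ * q₂ - q₁ * p₂), (q₁ * s₂ - q₂ * s₁) / (p₁ * q₂ - q₁ * p₂),
      (p₂ * r₁ - p₁ * r₂) / (p₁ * q₂ - q₁ * p₂), (p₁ * s₂ - p₂ * s₁) / (p₁ * q₂ - q₁ * p₂),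
      ?_, ?_⟩
    · intro z hz
      rw [div_mul_eq_mul_div, div_mul_eq_mul_div, ← add_div, eq_div_iff hΔ]
      linear_combination q₂ * E₁ z hz - q₁ * E₂ z hz
    · intro z hz
      rw [div_mul_eq_mul_div, div_mul_eq_mul_div, ← add_div, eq_div_iff hΔ]
      linear_combination p₂ * E₁ z hz - p₁ * E₂ z hz
  have cf₂e : ∀ w ∈ Ω, conj (f₂ w) = conj a * conj (f₁ w) + conj b * conj (g₁ w) := by
    intro w hw
    rw [hf₂e w hw, map_add, map_mul, map_mul]
  have cg₂e : ∀ w ∈ Ω, conj (g₂ w) = conj c * conj (f₁ w) + conj d * conj (g₁ w) := by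
    intro w hw
    rw [hg₂e w hw, map_add, map_mul, map_mul]
  have key0 : ∀ w ∈ Ω, ∀ z ∈ Ω,
      f₁ z * conj (f₁ w) - g₁ z * conj (g₁ w)
      - (a * f₁ z + b * g₁ z) * (conj a * conj (f₁ w) + conj b * conj (g₁ w))
      + (c * f₁ z + d * g₁ z) * (conj c * conj (f₁ w) + conj d * conj (g₁ w)) = 0 := by
    intro w hw z hz
    rw [← hf₂e z hz, ← hg₂e z hz, ← cf₂e w hw, ← cg₂e w hw]
    exact pol z hz w hw
  have hAB : ∀ w ∈ Ω, ((1 - a * conj a + c * conj c) * conj (f₁ w)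
        + (-(a * conj b) + c * conj d) * conj (g₁ w) = 0)
      ∧ ((-(b * conj a) + d * conj c) * conj (f₁ w)
        + (-1 - b * conj b + d * conj d) * conj (g₁ w) = 0) := by
    intro w hw
    exact hind _ _ (fun z hz => by linear_combination key0 w hw z hz)
  have h12 := hind (1 - conj a * a + conj c * c) (-(conj a * b) + conj c * d) (fun w hw => by
    have h := congrArg conj (hAB w hw).1
    simp only [map_add, map_mul, map_sub, map_neg, map_one, map_zero, Complex.conj_conj] at h
    linear_combination h)
  have h34 := hind (-(conj b * a) + conj d * c) (-1 - conj b * b + conj d * d) (fun w hw => by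
    have h := congrArg conj (hAB w hw).2
    simp only [map_add, map_mul, map_sub, map_neg, map_one, map_zero, Complex.conj_conj] at h
    linear_combination h)
  have eq1 : 1 - a * conj a + c * conj c = 0 := by
    have h := congrArg conj h12.1
    simp only [map_add, map_mul, map_sub, map_neg, map_one, map_zero, Complex.conj_conj] at h
    linear_combination h
  have eq2 : -(a * conj b) + c * conj d = 0 := by
    have h := congrArg conj h12.2
    simp only [map_add, map_mul, map_sub, map_neg, map_one, map_zero, Complex.conj_conj] at h
    linear_combination h
  have eq3 : -(b * conj a) + d * conj c = 0 := by
    have h := congrArg conj h34.1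
    simp only [map_add, map_mul, map_sub, map_neg, map_one, map_zero, Complex.conj_conj] at h
    linear_combination h
  have eq4 : -1 - b * conj b + d * conj d = 0 := by
    have h := congrArg conj h34.2
    simp only [map_add, map_mul, map_sub, map_neg, map_one, map_zero, Complex.conj_conj] at h
    linear_combination h
  -- norm identity
  have hnorm : ‖a‖ ^ 2 = 1 + ‖conj c‖ ^ 2 := by
    have h1 : a * conj a = 1 + c * conj c := by linear_combination -eq1
    rw [Complex.mul_conj, Complex.mul_conj] at h1
    have h2 : Complex.normSq a = 1 + Complex.normSq c := by exact_mod_cast h1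
    rw [Complex.norm_conj, Complex.sq_norm,
      Complex.sq_norm]
    exact h2
  by_cases hc0 : c = 0
  · -- case c = 0
    have ha1 : a * conj a = 1 := by rw [hc0] at eq1; linear_combination -eq1
    have hane : a ≠ 0 := by intro h; rw [h] at ha1; simp at ha1
    have hb0 : b = 0 := by
      rw [hc0] at eq2
      have h4 : a * conj b = 0 := by linear_combination -eq2
      rcases mul_eq_zero.mp h4 with h5 | h5
      · exact absurd h5 hane
      · simpa using congrArg conj h5
    have hd1 : d * conj d = 1 := by rw [hb0] at eq4; linear_combination eq4
    have he1 : (d * a) * conj (d * a) = 1 := by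
      rw [map_mul]
      linear_combination (a * conj a) * hd1 + ha1
    have habs : ‖d * a‖ = 1 := by
      have h2 : (Complex.normSq (d * a) : ℂ) = 1 := by rw [← Complex.mul_conj]; exact he1
      have h3 : Complex.normSq (d * a) = 1 := by exact_mod_cast h2
      rw [Complex.norm_def, h3, Real.sqrt_one]
    have hexp : Complex.exp (((d * a).arg : ℂ) * Complex.I) = d * a := by
      have h4 := Complex.norm_mul_exp_arg_mul_I (d * a)
      rw [habs] at h4
      simpa using h4
    refine ⟨a, conj c, (d * a).arg, by simpa using hnorm, ?_⟩
    intro z hz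
    constructor
    · rw [hf₂e z hz, hb0, hc0]
      simp
    · rw [hg₂e z hz, hc0, hexp]
      simp only [map_zero, zero_mul, zero_add]
      linear_combination (-(d * g₁ z)) * ha1
  · -- case c ≠ 0
    have hcc : conj c ≠ 0 := by
      intro h; exact hc0 (by simpa using congrArg conj h)
    have e3 : d * conj c = b * conj a := by linear_combination eq3
    have e3c : conj d * c = conj b * a := by
      have h := congrArg conj e3
      simpa [map_mul] using h
    have ea1 : a * conj a = 1 + c * conj c := by linear_combination -eq1
    have ea4 : d * conj d = 1 + b * conj b := by linear_combination eq4
    have hbc : b * conj b = c * conj c := by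
      have hm : (d * conj c) * (conj d * c) = (b * conj a) * (conj b * a) := by
        rw [e3, e3c]
      linear_combination (-1 : ℂ) * hm - (b * conj b) * ea1 + (c * conj c) * ea4
    have he1 : (b / conj c) * conj (b / conj c) = 1 := by
      rw [map_div₀, Complex.conj_conj]
      field_simp
      linear_combination hbc
    have habs : ‖b / conj c‖ = 1 := by
      have h2 : (Complex.normSq (b / conj c) : ℂ) = 1 := by rw [← Complex.mul_conj]; exact he1
      have h3 : Complex.normSq (b / conj c) = 1 := by exact_mod_cast h2
      rw [Complex.norm_def, h3, Real.sqrt_one]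
    have hexp : Complex.exp (((b / conj c).arg : ℂ) * Complex.I) = b / conj c := by
      have h4 := Complex.norm_mul_exp_arg_mul_I (b / conj c)
      rw [habs] at h4
      simpa using h4
    refine ⟨a, conj c, (b / conj c).arg, by simpa using hnorm, ?_⟩
    intro z hz
    constructor
    · rw [hf₂e z hz, hexp]
      field_simp
    · rw [hg₂e z hz, hexp]
      simp only [Complex.conj_conj]
      field_simp
      linear_combination g₁ z * e3
end

section
/- Let Ω₀ ⊆ ℂ be a domain and let F, G : [0,∞) × Ω₀ → ℂ be such that F(t,·), G(t,·) are holomorphic on Ω₀ for each t and the time dependence of F, G and their z-derivatives is C². Define x(t;a,b) + i·y(t;a,b) = F(t,z) + conj(G(t,z)) with z = a + ib, and write f = ∂F/∂z, g = ∂G/∂z. Then the Euler compatibility equation ∂/∂t ( x_a·x_{bt} + y_a·y_{bt} − x_b·x_{at} − y_b·y_{at} ) = 0 holds on [0,∞) × Ω₀ if and only if ∂/∂t ( Im( f_t·conj(f) − g·conj(g_t) ) ) = 0 holds on [0,∞) × Ω₀. -/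
open Set

/-- The labelling map `(t,a,b) ↦ F(t, a+ib) + conj(G(t, a+ib))`. -/
noncomputable def labelMap (F G : ℝ → ℂ → ℂ) (t a b : ℝ) : ℂ :=
  F t (Complex.mk a b) + (starRingEnd ℂ) (G t (Complex.mk a b))

/-- `x(t;a,b)`, the real part of the labelling map. -/
noncomputable def xLab (F G : ℝ → ℂ → ℂ) (t a b : ℝ) : ℝ := (labelMap F G t a b).re

/-- `y(t;a,b)`, the imaginary part of the labelling map. -/
noncomputable def yLab (F G : ℝ → ℂ → ℂ) (t a b : ℝ) : ℝ := (labelMap F G t a b).im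

/-- `x_a`, the partial derivative of `x` in the label coordinate `a`. -/
noncomputable def xa (F G : ℝ → ℂ → ℂ) (t a b : ℝ) : ℝ :=
  deriv (fun a' => xLab F G t a' b) a

/-- `x_b`, the partial derivative of `x` in the label coordinate `b`. -/
noncomputable def xb (F G : ℝ → ℂ → ℂ) (t a b : ℝ) : ℝ :=
  deriv (fun b' => xLab F G t a b') b

/-- `y_a`, the partial derivative of `y` in the label coordinate `a`. -/
noncomputable def ya (F G : ℝ → ℂ → ℂ) (t a b : ℝ) : ℝ :=
  deriv (fun a' => yLab F G t a' b) a

/-- `y_b`, the partial derivative of `y` in the label coordinate `b`. -/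
noncomputable def yb (F G : ℝ → ℂ → ℂ) (t a b : ℝ) : ℝ :=
  deriv (fun b' => yLab F G t a b') b

/-- `x_{at}`, the time derivative (within `[0,∞)`) of `x_a`. -/
noncomputable def xat (F G : ℝ → ℂ → ℂ) (t a b : ℝ) : ℝ :=
  derivWithin (fun s => xa F G s a b) (Ici 0) t

/-- `x_{bt}`, the time derivative (within `[0,∞)`) of `x_b`. -/
noncomputable def xbt (F G : ℝ → ℂ → ℂ) (t a b : ℝ) : ℝ :=
  derivWithin (fun s => xb F G s a b) (Ici 0) t

/-- `y_{at}`, the time derivative (within `[0,∞)`) of `y_a`. -/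
noncomputable def yat (F G : ℝ → ℂ → ℂ) (t a b : ℝ) : ℝ :=
  derivWithin (fun s => ya F G s a b) (Ici 0) t

/-- `y_{bt}`, the time derivative (within `[0,∞)`) of `y_b`. -/
noncomputable def ybt (F G : ℝ → ℂ → ℂ) (t a b : ℝ) : ℝ :=
  derivWithin (fun s => yb F G s a b) (Ici 0) t

/-- The quantity `x_a x_{bt} + y_a y_{bt} − x_b x_{at} − y_b y_{at}` appearing in the
Euler equation in Lagrangian variables. -/
noncomputable def eulerExpr (F G : ℝ → ℂ → ℂ) (t a b : ℝ) : ℝ :=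
  xa F G t a b * xbt F G t a b + ya F G t a b * ybt F G t a b
    - xb F G t a b * xat F G t a b - yb F G t a b * yat F G t a b

lemma hasDerivAt_comp_hol {w : ℂ → ℂ} {z : ℂ} (hw : DifferentiableAt ℂ w z)
    {γ : ℝ → ℂ} {c : ℂ} {a : ℝ} (hγ : HasDerivAt γ c a) (hza : γ a = z) :
    HasDerivAt (fun x => w (γ x)) (deriv w z * c) a := by
  have h1 : HasFDerivAt w
      ((ContinuousLinearMap.smulRight (1 : ℂ →L[ℂ] ℂ) (deriv w z)).restrictScalars ℝ) z :=
    (hw.hasDerivAt).hasFDerivAt.restrictScalars ℝ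
  have h2 := h1.comp_hasDerivAt_of_eq a hγ hza.symm
  simpa [mul_comm, Function.comp_def] using h2

lemma curve_a (z : ℂ) : HasDerivAt (fun a' : ℝ => Complex.mk a' z.im) 1 z.re := by
  have h : (fun a' : ℝ => Complex.mk a' z.im) = fun a' : ℝ => (a' : ℂ) + (z.im : ℂ) * Complex.I :=
    funext fun a' => Complex.mk_eq_add_mul_I a' z.im
  rw [h]
  simpa using (Complex.ofRealCLM.hasDerivAt (x := z.re)).add_const ((z.im : ℂ) * Complex.I)

lemma curve_b (z : ℂ) : HasDerivAt (fun b' : ℝ => Complex.mk z.re b') Complex.I z.im := by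
  have h : (fun b' : ℝ => Complex.mk z.re b') = fun b' : ℝ => (z.re : ℂ) + (b' : ℂ) * Complex.I :=
    funext fun b' => Complex.mk_eq_add_mul_I z.re b'
  rw [h]
  simpa using ((Complex.ofRealCLM.hasDerivAt (x := z.im)).mul_const Complex.I).const_add ((z.re : ℂ))
open Set Complex in
lemma spatial (Ω₀ : Set ℂ) (hΩo : IsOpen Ω₀) (F G : ℝ → ℂ → ℂ) {z : ℂ} (hz : z ∈ Ω₀)
    {u : ℝ} (hFu : DifferentiableOn ℂ (F u) Ω₀) (hGu : DifferentiableOn ℂ (G u) Ω₀) :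
    xa F G u z.re z.im = (deriv (F u) z + star (deriv (G u) z)).re ∧
    ya F G u z.re z.im = (deriv (F u) z + star (deriv (G u) z)).im ∧
    xb F G u z.re z.im = (deriv (F u) z * Complex.I + star (deriv (G u) z * Complex.I)).re ∧
    yb F G u z.re z.im = (deriv (F u) z * Complex.I + star (deriv (G u) z * Complex.I)).im := by
  have hFd : DifferentiableAt ℂ (F u) z := hFu.differentiableAt (hΩo.mem_nhds hz)
  have hGd : DifferentiableAt ℂ (G u) z := hGu.differentiableAt (hΩo.mem_nhds hz)
  have heta : (Complex.mk z.re z.im) = z := Complex.eta z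
  have hdFa := hasDerivAt_comp_hol hFd (curve_a z) heta
  have hdGa := hasDerivAt_comp_hol hGd (curve_a z) heta
  have hdFb := hasDerivAt_comp_hol hFd (curve_b z) heta
  have hdGb := hasDerivAt_comp_hol hGd (curve_b z) heta
  have hlaba : HasDerivAt (fun a' : ℝ => labelMap F G u a' z.im)
      (deriv (F u) z * 1 + star (deriv (G u) z * 1)) z.re := hdFa.add hdGa.star
  have hlabb : HasDerivAt (fun b' : ℝ => labelMap F G u z.re b')
      (deriv (F u) z * Complex.I + star (deriv (G u) z * Complex.I)) z.im := hdFb.add hdGb.star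
  refine ⟨?_, ?_, ?_, ?_⟩
  · have h := (Complex.reCLM.hasFDerivAt.comp_hasDerivAt z.re hlaba).deriv
    simpa [xa, xLab, Function.comp_def] using h
  · have h := (Complex.imCLM.hasFDerivAt.comp_hasDerivAt z.re hlaba).deriv
    simpa [ya, yLab, Function.comp_def] using h
  · have h := (Complex.reCLM.hasFDerivAt.comp_hasDerivAt z.im hlabb).deriv
    simpa [xb, xLab, Function.comp_def] using h
  · have h := (Complex.imCLM.hasFDerivAt.comp_hasDerivAt z.im hlabb).deriv
    simpa [yb, yLab, Function.comp_def] using h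
open Set Complex in
lemma eulerExpr_eq (Ω₀ : Set ℂ) (hΩo : IsOpen Ω₀) (F G : ℝ → ℂ → ℂ) {z : ℂ} (hz : z ∈ Ω₀)
    (hF : ∀ t ∈ Ici (0:ℝ), DifferentiableOn ℂ (F t) Ω₀)
    (hG : ∀ t ∈ Ici (0:ℝ), DifferentiableOn ℂ (G t) Ω₀)
    (hft : ContDiffOn ℝ 2 (fun t => deriv (F t) z) (Ici 0))
    (hgt : ContDiffOn ℝ 2 (fun t => deriv (G t) z) (Ici 0))
    {s : ℝ} (hs : s ∈ Ici (0:ℝ)) :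
    eulerExpr F G s z.re z.im =
      -2 * (derivWithin (fun u => deriv (F u) z) (Ici 0) s * star (deriv (F s) z)
            - deriv (G s) z * star (derivWithin (fun u => deriv (G u) z) (Ici 0) s)).im := by
  set f : ℝ → ℂ := fun u => deriv (F u) z with hf
  set g : ℝ → ℂ := fun u => deriv (G u) z with hg
  have hud : UniqueDiffWithinAt ℝ (Ici (0:ℝ)) s := uniqueDiffOn_Ici 0 s hs
  have hfd : HasDerivWithinAt f (derivWithin f (Ici 0) s) (Ici 0) s :=
    ((hft.differentiableOn (by norm_num)) s hs).hasDerivWithinAt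
  have hgd : HasDerivWithinAt g (derivWithin g (Ici 0) s) (Ici 0) s :=
    ((hgt.differentiableOn (by norm_num)) s hs).hasDerivWithinAt
  set f' := derivWithin f (Ici 0) s
  set g' := derivWithin g (Ici 0) s
  -- time derivatives
  have hxat : xat F G s z.re z.im = (f' + star g').re := by
    have hEq : EqOn (fun u => xa F G u z.re z.im) (fun u => (f u + star (g u)).re) (Ici 0) :=
      fun u hu => (spatial Ω₀ hΩo F G hz (hF u hu) (hG u hu)).1
    have h1 : derivWithin (fun u => xa F G u z.re z.im) (Ici 0) s
        = derivWithin (fun u => (f u + star (g u)).re) (Ici 0) s :=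
      derivWithin_congr hEq (hEq hs)
    have h2 := (Complex.reCLM.hasFDerivAt.comp_hasDerivWithinAt s (hfd.add hgd.star)).derivWithin hud
    rw [xat, h1]
    exact h2
  have hyat : yat F G s z.re z.im = (f' + star g').im := by
    have hEq : EqOn (fun u => ya F G u z.re z.im) (fun u => (f u + star (g u)).im) (Ici 0) :=
      fun u hu => (spatial Ω₀ hΩo F G hz (hF u hu) (hG u hu)).2.1
    have h1 : derivWithin (fun u => ya F G u z.re z.im) (Ici 0) s
        = derivWithin (fun u => (f u + star (g u)).im) (Ici 0) s :=
      derivWithin_congr hEq (hEq hs)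
    have h2 := (Complex.imCLM.hasFDerivAt.comp_hasDerivWithinAt s (hfd.add hgd.star)).derivWithin hud
    rw [yat, h1]
    exact h2
  have hxbt : xbt F G s z.re z.im = (f' * Complex.I + star (g' * Complex.I)).re := by
    have hEq : EqOn (fun u => xb F G u z.re z.im)
        (fun u => (f u * Complex.I + star (g u * Complex.I)).re) (Ici 0) :=
      fun u hu => (spatial Ω₀ hΩo F G hz (hF u hu) (hG u hu)).2.2.1
    have h1 : derivWithin (fun u => xb F G u z.re z.im) (Ici 0) s
        = derivWithin (fun u => (f u * Complex.I + star (g u * Complex.I)).re) (Ici 0) s :=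
      derivWithin_congr hEq (hEq hs)
    have h2 := (Complex.reCLM.hasFDerivAt.comp_hasDerivWithinAt s
      ((hfd.mul_const Complex.I).add (hgd.mul_const Complex.I).star)).derivWithin hud
    rw [xbt, h1]
    exact h2
  have hybt : ybt F G s z.re z.im = (f' * Complex.I + star (g' * Complex.I)).im := by
    have hEq : EqOn (fun u => yb F G u z.re z.im)
        (fun u => (f u * Complex.I + star (g u * Complex.I)).im) (Ici 0) :=
      fun u hu => (spatial Ω₀ hΩo F G hz (hF u hu) (hG u hu)).2.2.2
    have h1 : derivWithin (fun u => yb F G u z.re z.im) (Ici 0) s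
        = derivWithin (fun u => (f u * Complex.I + star (g u * Complex.I)).im) (Ici 0) s :=
      derivWithin_congr hEq (hEq hs)
    have h2 := (Complex.imCLM.hasFDerivAt.comp_hasDerivWithinAt s
      ((hfd.mul_const Complex.I).add (hgd.mul_const Complex.I).star)).derivWithin hud
    rw [ybt, h1]
    exact h2
  obtain ⟨h1, h2, h3, h4⟩ := spatial Ω₀ hΩo F G hz (hF s hs) (hG s hs)
  rw [eulerExpr, h1, h2, h3, h4, hxat, hyat, hxbt, hybt]
  simp only [Complex.add_re, Complex.add_im, Complex.mul_re, Complex.mul_im, Complex.sub_im,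
    Complex.I_re, Complex.I_im, Complex.star_def, Complex.conj_re, Complex.conj_im]
  ring

/-- **Euler's equation in Lagrangian variables for harmonic labellings.** With
`f = ∂F/∂z`, `g = ∂G/∂z` (and time derivatives taken within `[0,∞)`), the Euler
compatibility equation `∂_t(x_a x_{bt} + y_a y_{bt} − x_b x_{at} − y_b y_{at}) = 0`
holds on `[0,∞) × Ω₀` iff `∂_t Im(f_t conj f − g conj g_t) = 0` holds there. -/
theorem stmt_5 (Ω₀ : Set ℂ) (hΩne : Ω₀.Nonempty) (hΩo : IsOpen Ω₀) (hΩc : IsConnected Ω₀)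
    (F G : ℝ → ℂ → ℂ)
    (hF : ∀ t ∈ Ici (0:ℝ), DifferentiableOn ℂ (F t) Ω₀)
    (hG : ∀ t ∈ Ici (0:ℝ), DifferentiableOn ℂ (G t) Ω₀)
    (hFt : ∀ z ∈ Ω₀, ContDiffOn ℝ 2 (fun t => F t z) (Ici 0))
    (hGt : ∀ z ∈ Ω₀, ContDiffOn ℝ 2 (fun t => G t z) (Ici 0))
    (hft : ∀ z ∈ Ω₀, ContDiffOn ℝ 2 (fun t => deriv (F t) z) (Ici 0))
    (hgt : ∀ z ∈ Ω₀, ContDiffOn ℝ 2 (fun t => deriv (G t) z) (Ici 0)) :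
    (∀ t ∈ Ici (0:ℝ), ∀ z ∈ Ω₀,
        derivWithin (fun s => eulerExpr F G s z.re z.im) (Ici 0) t = 0)
      ↔ (∀ t ∈ Ici (0:ℝ), ∀ z ∈ Ω₀,
        derivWithin (fun s =>
          (derivWithin (fun u => deriv (F u) z) (Ici 0) s
              * (starRingEnd ℂ) (deriv (F s) z)
            - deriv (G s) z
              * (starRingEnd ℂ) (derivWithin (fun u => deriv (G u) z) (Ici 0) s)).im)
          (Ici 0) t = 0) := by
  have key : ∀ t ∈ Ici (0:ℝ), ∀ z ∈ Ω₀,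
      derivWithin (fun s => eulerExpr F G s z.re z.im) (Ici 0) t
        = -2 * derivWithin (fun s =>
            (derivWithin (fun u => deriv (F u) z) (Ici 0) s
                * (starRingEnd ℂ) (deriv (F s) z)
              - deriv (G s) z
                * (starRingEnd ℂ) (derivWithin (fun u => deriv (G u) z) (Ici 0) s)).im)
            (Ici 0) t := by
    intro t ht z hz
    set h : ℝ → ℝ := fun s =>
      (derivWithin (fun u => deriv (F u) z) (Ici 0) s * (starRingEnd ℂ) (deriv (F s) z)
        - deriv (G s) z * (starRingEnd ℂ) (derivWithin (fun u => deriv (G u) z) (Ici 0) s)).im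
      with hh
    have hud : UniqueDiffWithinAt ℝ (Ici (0:ℝ)) t := uniqueDiffOn_Ici 0 t ht
    have hEq : EqOn (fun s => eulerExpr F G s z.re z.im) (fun s => -2 * h s) (Ici 0) :=
      fun s hs => eulerExpr_eq Ω₀ hΩo F G hz hF hG (hft z hz) (hgt z hz) hs
    have hdiff : DifferentiableWithinAt ℝ h (Ici 0) t := by
      have hf1 : DifferentiableWithinAt ℝ (fun s => deriv (F s) z) (Ici 0) t :=
        ((hft z hz).differentiableOn (by norm_num)) t ht
      have hg1 : DifferentiableWithinAt ℝ (fun s => deriv (G s) z) (Ici 0) t :=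
        ((hgt z hz).differentiableOn (by norm_num)) t ht
      have hft2 : ContDiffOn ℝ 1 (derivWithin (fun u => deriv (F u) z) (Ici 0)) (Ici 0) :=
        (hft z hz).derivWithin (uniqueDiffOn_Ici 0) (by norm_num)
      have hgt2 : ContDiffOn ℝ 1 (derivWithin (fun u => deriv (G u) z) (Ici 0)) (Ici 0) :=
        (hgt z hz).derivWithin (uniqueDiffOn_Ici 0) (by norm_num)
      have hf2 : DifferentiableWithinAt ℝ
          (derivWithin (fun u => deriv (F u) z) (Ici 0)) (Ici 0) t :=
        (hft2.differentiableOn one_ne_zero) t ht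
      have hg2 : DifferentiableWithinAt ℝ
          (derivWithin (fun u => deriv (G u) z) (Ici 0)) (Ici 0) t :=
        (hgt2.differentiableOn one_ne_zero) t ht
      have : DifferentiableWithinAt ℝ (fun s =>
          derivWithin (fun u => deriv (F u) z) (Ici 0) s * (starRingEnd ℂ) (deriv (F s) z)
            - deriv (G s) z * (starRingEnd ℂ)
                (derivWithin (fun u => deriv (G u) z) (Ici 0) s)) (Ici 0) t :=
        (hf2.mul hf1.star).sub (hg1.mul hg2.star)
      exact Complex.imCLM.differentiableAt.comp_differentiableWithinAt t this
    calc derivWithin (fun s => eulerExpr F G s z.re z.im) (Ici 0) t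
        = derivWithin (fun s => -2 * h s) (Ici 0) t := derivWithin_congr hEq (hEq ht)
      _ = -2 * derivWithin h (Ici 0) t := by rw [derivWithin_const_mul (hd := hdiff)]
  constructor
  · intro H t ht z hz
    have h1 := H t ht z hz
    rw [key t ht z hz] at h1
    linarith
  · intro H t ht z hz
    rw [key t ht z hz, H t ht z hz]
    ring
end

section
/- Let c > 0 and ν₀ ∈ ℝ, and let α, β : [0,∞) → ℂ be C¹ functions satisfying α'(t)·conj(α(t)) − β(t)·conj(β'(t)) = i·ν₀ and |α(t)|² = |β(t)|² + c for all t ≥ 0. Then there exists φ₀ ∈ ℝ with α(0) = √(|β(0)|² + c)·e^{iφ₀} such that for all t ≥ 0: α(t) = √(|β(t)|² + c) · exp( i·( φ₀ + ∫₀ᵗ (ν₀ + Im{β(s)·conj(β'(s))}) / (|β(s)|² + c) ds ) ). -/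
open Set

/-- **Solution of the ODE system (2e)/(22e).** If `α, β : [0,∞) → ℂ` are `C¹` with
`α' conj α − β conj β' = i ν₀` and `|α|² = |β|² + c` (`c > 0`), then
`α(t) = √(|β(t)|² + c) · e^{i(φ₀ + ∫₀ᵗ (ν₀ + Im(β conj β'))/(|β|² + c))}` for some
`φ₀ ∈ ℝ` with `α(0) = √(|β(0)|² + c) e^{iφ₀}`. -/
theorem stmt_10 (c : ℝ) (hc : 0 < c) (ν₀ : ℝ) (α β : ℝ → ℂ)
    (hα : ContDiffOn ℝ 1 α (Ici 0)) (hβ : ContDiffOn ℝ 1 β (Ici 0))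
    (hode : ∀ t ∈ Ici (0:ℝ),
      derivWithin α (Ici 0) t * (starRingEnd ℂ) (α t)
        - β t * (starRingEnd ℂ) (derivWithin β (Ici 0) t) = Complex.I * (ν₀ : ℂ))
    (hmod : ∀ t ∈ Ici (0:ℝ), ‖α t‖ ^ 2 = ‖β t‖ ^ 2 + c) :
    ∃ φ₀ : ℝ, α 0 = (Real.sqrt (‖β 0‖ ^ 2 + c) : ℂ) * Complex.exp (Complex.I * (φ₀ : ℂ)) ∧
      ∀ t ∈ Ici (0:ℝ),
        α t = (Real.sqrt (‖β t‖ ^ 2 + c) : ℂ) *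
          Complex.exp (Complex.I * ((φ₀ + ∫ s in (0:ℝ)..t,
            (ν₀ + (β s * (starRingEnd ℂ) (derivWithin β (Ici 0) s)).im)
              / (‖β s‖ ^ 2 + c) : ℝ) : ℝ)) := by
  have uD : UniqueDiffOn ℝ (Ici (0:ℝ)) := uniqueDiffOn_Ici 0
  set β' : ℝ → ℂ := derivWithin β (Ici 0) with hβ'def
  set u : ℝ → ℝ := fun t => ‖β t‖ ^ 2 + c with hudef
  have hu_pos : ∀ t, 0 < u t := fun t => by positivity
  have hβ'cont : ContinuousOn β' (Ici 0) := hβ.continuousOn_derivWithin uD le_rfl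
  have hu_cont : ContinuousOn u (Ici 0) := by
    exact ((hβ.continuousOn.norm.pow 2).add continuousOn_const)
  set f : ℝ → ℂ := fun s => (β s * (starRingEnd ℂ) (β' s) + Complex.I * ν₀) / (u s : ℂ)
    with hfdef
  have hf_cont : ContinuousOn f (Ici 0) := by
    apply ContinuousOn.div
    · exact ((hβ.continuousOn.mul (Complex.continuous_conj.comp_continuousOn
        hβ'cont))).add continuousOn_const
    · exact Complex.continuous_ofReal.comp_continuousOn hu_cont
    · intro t ht
      exact_mod_cast (hu_pos t).ne'
  -- α t ≠ 0
  have hαne : ∀ t ∈ Ici (0:ℝ), α t ≠ 0 := by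
    intro t ht h
    have := hmod t ht
    rw [h] at this
    simp at this
    nlinarith [hu_pos t, sq_nonneg (‖β t‖)]
  -- the ODE in normal form
  have hα' : ∀ t ∈ Ici (0:ℝ), HasDerivWithinAt α (α t * f t) (Ici 0) t := by
    intro t ht
    have hd := ((hα.differentiableOn one_ne_zero) t ht).hasDerivWithinAt
    have hode' : derivWithin α (Ici 0) t * (starRingEnd ℂ) (α t)
        = β t * (starRingEnd ℂ) (β' t) + Complex.I * ν₀ := by
      have := hode t ht; linear_combination this
    have hmc : α t * (starRingEnd ℂ) (α t) = ((u t : ℝ) : ℂ) := by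
      rw [Complex.mul_conj]
      norm_cast
      show Complex.normSq (α t) = ‖β t‖ ^ 2 + c
      rw [← hmod t ht, Complex.normSq_eq_norm_sq]
    have : α t * f t = derivWithin α (Ici 0) t := by
      rw [hfdef]
      simp only
      rw [← hode', mul_div_assoc']
      rw [show α t * (derivWithin α (Ici 0) t * (starRingEnd ℂ) (α t))
        = derivWithin α (Ici 0) t * (α t * (starRingEnd ℂ) (α t)) by ring, hmc,
        mul_div_assoc, div_self, mul_one]
      exact_mod_cast (hu_pos t).ne'
    rwa [this]
  -- the integral of f
  set F : ℝ → ℂ := fun t => ∫ s in (0:ℝ)..t, f s with hFdef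
  have hint : ∀ t ∈ Ici (0:ℝ), IntervalIntegrable f MeasureTheory.volume 0 t := by
    intro t ht
    apply ContinuousOn.intervalIntegrable
    apply hf_cont.mono
    rw [uIcc_of_le ht]
    exact fun x hx => hx.1
  have hFderiv : ∀ t ∈ Ici (0:ℝ), HasDerivWithinAt F (f t) (Ici 0) t := by
    intro t ht
    rcases eq_or_lt_of_le (mem_Ici.mp ht) with rfl | htpos
    · exact intervalIntegral.integral_hasDerivWithinAt_right (hint 0 ht)
        ((hf_cont.mono Ioi_subset_Ici_self).stronglyMeasurableAtFilter_nhdsWithin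
          measurableSet_Ioi 0)
        ((hf_cont 0 ht).mono Ioi_subset_Ici_self)
    · have hca : ContinuousAt f t :=
        hf_cont.continuousAt (Ici_mem_nhds htpos)
      exact (intervalIntegral.integral_hasDerivAt_right (hint t ht)
        ⟨Ici 0, Ici_mem_nhds htpos, (hf_cont.mono le_rfl).aestronglyMeasurable
          measurableSet_Ici⟩ hca).hasDerivWithinAt
  -- α t = α 0 * exp (F t)
  have hkey : ∀ t ∈ Ici (0:ℝ), α t = α 0 * Complex.exp (F t) := by
    have hg : ∀ t ∈ Ici (0:ℝ),
        HasDerivWithinAt (fun s => α s * Complex.exp (-F s)) 0 (Ici 0) t := by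
      intro t ht
      have := (hα' t ht).mul ((hFderiv t ht).neg.cexp)
      refine this.congr_deriv ?_
      ring
    have hconst : ∀ t ∈ Ici (0:ℝ),
        α t * Complex.exp (-F t) = α 0 * Complex.exp (-F 0) := by
      intro t ht
      apply (convex_Ici (0:ℝ)).is_const_of_fderivWithin_eq_zero
        (fun s hs => (hg s hs).differentiableWithinAt) _ ht (self_mem_Ici)
      intro s hs
      have h0 : fderivWithin ℝ (fun s => α s * Complex.exp (-F s)) (Ici 0) s
          = ContinuousLinearMap.smulRight (1 : ℝ →L[ℝ] ℝ) (0 : ℂ) :=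
        (hg s hs).hasFDerivWithinAt.fderivWithin (uD s hs)
      rw [h0]
      ext x
      simp
    intro t ht
    have h := hconst t ht
    have hF0 : F 0 = 0 := by simp [hFdef]
    rw [hF0] at h
    simp only [neg_zero, Complex.exp_zero, mul_one] at h
    have := congrArg (fun z => z * Complex.exp (F t)) h
    simpa [mul_assoc, ← Complex.exp_add] using this
  -- derivative of u
  have hu' : ∀ t ∈ Ici (0:ℝ),
      HasDerivWithinAt u (2 * (β t * (starRingEnd ℂ) (β' t)).re) (Ici 0) t := by
    intro t ht
    have hb := ((hβ.differentiableOn one_ne_zero) t ht).hasDerivWithinAt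
    have hbc : HasDerivWithinAt (fun s => (starRingEnd ℂ) (β s))
        ((starRingEnd ℂ) (β' t)) (Ici 0) t := by
      have := (Complex.conjCLE.hasFDerivAt).comp_hasDerivWithinAt t hb
      exact this
    have hprod : HasDerivWithinAt (fun s => β s * (starRingEnd ℂ) (β s))
        (β' t * (starRingEnd ℂ) (β t) + β t * (starRingEnd ℂ) (β' t)) (Ici 0) t :=
      hb.mul hbc
    have hre := (Complex.reCLM.hasFDerivAt).comp_hasDerivWithinAt t hprod
    have heq : ∀ s, (β s * (starRingEnd ℂ) (β s)).re + c = u s := by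
      intro s
      rw [Complex.mul_conj, Complex.ofReal_re,
        show Complex.normSq (β s) = ‖β s‖ ^ 2 by
          rw [Complex.normSq_eq_norm_sq]]
    have := hre.add_const c
    have h2 : HasDerivWithinAt u
        ((β' t * (starRingEnd ℂ) (β t) + β t * (starRingEnd ℂ) (β' t)).re) (Ici 0) t := by
      exact HasDerivWithinAt.congr this (fun s _ => (heq s).symm) (heq t).symm
    convert h2 using 1
    have : β' t * (starRingEnd ℂ) (β t) = (starRingEnd ℂ) (β t * (starRingEnd ℂ) (β' t)) := by
      rw [map_mul]; simp [mul_comm]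
    rw [Complex.add_re, this, Complex.conj_re]
    ring
  -- real part of F
  have hre_f : ∀ t, (f t).re = (β t * (starRingEnd ℂ) (β' t)).re / u t := by
    intro t
    rw [hfdef]
    rw [Complex.div_re]
    simp only [Complex.normSq_ofReal, Complex.ofReal_re, Complex.ofReal_im, Complex.add_re,
      Complex.add_im, Complex.mul_re, Complex.mul_im, Complex.I_re, Complex.I_im,
      Complex.ofReal_re, Complex.ofReal_im]
    have hne := (hu_pos t).ne'
    field_simp
    ring
  have him_f : ∀ t, (f t).im
      = (ν₀ + (β t * (starRingEnd ℂ) (β' t)).im) / u t := by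
    intro t
    rw [hfdef]
    rw [Complex.div_im]
    simp only [Complex.normSq_ofReal, Complex.ofReal_re, Complex.ofReal_im, Complex.add_re,
      Complex.add_im, Complex.mul_re, Complex.mul_im, Complex.I_re, Complex.I_im,
      Complex.ofReal_re, Complex.ofReal_im]
    have hne := (hu_pos t).ne'
    field_simp
    ring
  have hFre : ∀ t ∈ Ici (0:ℝ), (F t).re = (Real.log (u t) - Real.log (u 0)) / 2 := by
    have hg : ∀ t ∈ Ici (0:ℝ),
        HasDerivWithinAt (fun s => (F s).re - Real.log (u s) / 2) 0 (Ici 0) t := by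
      intro t ht
      have h1 : HasDerivWithinAt (fun s => (F s).re) ((f t).re) (Ici 0) t :=
        (Complex.reCLM.hasFDerivAt).comp_hasDerivWithinAt t (hFderiv t ht)
      have h2 : HasDerivWithinAt (fun s => Real.log (u s))
          ((u t)⁻¹ * (2 * (β t * (starRingEnd ℂ) (β' t)).re)) (Ici 0) t :=
        (Real.hasDerivAt_log (hu_pos t).ne').comp_hasDerivWithinAt t (hu' t ht)
      have := h1.sub (h2.div_const 2)
      refine this.congr_deriv ?_
      rw [hre_f t]
      field_simp
      ring
    have hconst : ∀ t ∈ Ici (0:ℝ),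
        (F t).re - Real.log (u t) / 2 = (F 0).re - Real.log (u 0) / 2 := by
      intro t ht
      apply (convex_Ici (0:ℝ)).is_const_of_fderivWithin_eq_zero
        (fun s hs => (hg s hs).differentiableWithinAt) _ ht (self_mem_Ici)
      intro s hs
      have h0 := (hg s hs).hasFDerivWithinAt.fderivWithin (uD s hs)
      rw [h0]
      ext x
      simp
    intro t ht
    have h := hconst t ht
    have hF0 : F 0 = 0 := by simp [hFdef]
    rw [hF0] at h
    simp only [Complex.zero_re, zero_sub] at h
    linarith
  -- imaginary part of F
  have hFim : ∀ t ∈ Ici (0:ℝ), (F t).im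
      = ∫ s in (0:ℝ)..t, (ν₀ + (β s * (starRingEnd ℂ) (β' s)).im) / (‖β s‖ ^ 2 + c) := by
    intro t ht
    have := (Complex.imCLM.intervalIntegral_comp_comm (hint t ht)).symm
    simp only [Complex.imCLM_apply] at this
    rw [hFdef]
    simp only
    rw [this]
    apply intervalIntegral.integral_congr
    intro s _
    simp only
    rw [him_f s]
  -- assemble
  have hnorm0 : Real.sqrt (u 0) = ‖α 0‖ := by
    rw [hudef]
    simp only
    rw [← hmod 0 self_mem_Ici, Real.sqrt_sq (norm_nonneg _)]
  refine ⟨Complex.arg (α 0), ?_, ?_⟩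
  · rw [show (‖β 0‖ ^ 2 + c) = u 0 from rfl, hnorm0]
    have habs : ((‖α 0‖ : ℝ) : ℂ) * Complex.exp ((Complex.arg (α 0) : ℂ) * Complex.I) = α 0 := by
      exact_mod_cast Complex.norm_mul_exp_arg_mul_I (α 0)
    rw [mul_comm Complex.I]
    exact habs.symm
  · intro t ht
    rw [hkey t ht]
    have hsplit : F t = ((F t).re : ℂ) + ((F t).im : ℂ) * Complex.I :=
      (Complex.re_add_im (F t)).symm
    rw [hsplit, Complex.exp_add]
    have hexp_re : Complex.exp (((F t).re : ℂ))
        = ((Real.sqrt (u t) / Real.sqrt (u 0) : ℝ) : ℂ) := by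
      rw [← Complex.ofReal_exp]
      congr 1
      rw [hFre t ht]
      rw [show (Real.log (u t) - Real.log (u 0)) / 2
        = Real.log (u t) / 2 - Real.log (u 0) / 2 by ring]
      rw [← Real.log_sqrt (hu_pos t).le, ← Real.log_sqrt (hu_pos 0).le,
        Real.exp_sub, Real.exp_log (Real.sqrt_pos.mpr (hu_pos t)),
        Real.exp_log (Real.sqrt_pos.mpr (hu_pos 0))]
    have hα0 : α 0 = (Real.sqrt (u 0) : ℂ) * Complex.exp ((Complex.arg (α 0) : ℂ) * Complex.I) := by
      have habs : ((‖α 0‖ : ℝ) : ℂ) * Complex.exp ((Complex.arg (α 0) : ℂ) * Complex.I) = α 0 := by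
        exact_mod_cast Complex.norm_mul_exp_arg_mul_I (α 0)
      rw [hnorm0]
      exact habs.symm
    conv_lhs => rw [hα0]
    rw [hexp_re]
    rw [show (‖β t‖ ^ 2 + c) = u t from rfl]
    rw [Complex.ofReal_add, mul_add, Complex.exp_add]
    rw [hFim t ht]
    have h0 : ((Real.sqrt (u 0) : ℝ) : ℂ) ≠ 0 := by
      exact_mod_cast (Real.sqrt_pos.mpr (hu_pos 0)).ne'
    rw [mul_comm ((Complex.arg (α 0) : ℂ)) Complex.I]
    rw [mul_comm ((∫ s in (0:ℝ)..t,
      (ν₀ + (β s * (starRingEnd ℂ) (β' s)).im) / (‖β s‖ ^ 2 + c) : ℝ) : ℂ) Complex.I]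
    rw [Complex.ofReal_div, mul_mul_mul_comm]
    have hcancel : ((Real.sqrt (u 0) : ℝ) : ℂ)
        * (((Real.sqrt (u t) : ℝ) : ℂ) / ((Real.sqrt (u 0) : ℝ) : ℂ))
        = ((Real.sqrt (u t) : ℝ) : ℂ) := by
      field_simp
    rw [hcancel]
end
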